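/- arXiv:2510.19876 — 8 statements merged into one kernel-verified Lean document; each statement's English description precedes it below -/
import Mathlib

section
/- Let V be a vector space of dimension n over an algebraically closed field 𝕂, with 𝕂[V] = 𝕂[x₁,…,xₙ], and let g ∈ GL(V). If there exists an irreducible polynomial α in the maximal ideal 𝔪 = (x₁,…,xₙ) such that g·xᵢ − xᵢ lies in the principal ideal (α) for every coordinate function xᵢ (i = 1,…,n), then dim ker(g − E) ≥ n − 1, i.e., g is a pseudoreflection or the identity. -/
open MvPolynomial Matrix

/-- The action of `g ∈ GL_n(K)` on polynomials: `(g • f)(x) = f (g⁻¹ • x)`. -/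
noncomputable def polyAct {K : Type*} [Field K] {n : ℕ} (g : GL (Fin n) K) :
    MvPolynomial (Fin n) K →ₐ[K] MvPolynomial (Fin n) K :=
  aeval fun i => ∑ j, ((g⁻¹ : GL (Fin n) K) : Matrix (Fin n) (Fin n) K) i j • X j
/-- Dimension of the fixed space of a matrix. -/
noncomputable def fixedDim {K : Type*} [Field K] {n : ℕ} (g : Matrix (Fin n) (Fin n) K) : ℕ :=
  Module.finrank K (LinearMap.ker (Matrix.toLin' (g - 1)))

private lemma coeff_sum_smul_X {K : Type*} [Field K] {n : ℕ} (c : Fin n → K) (j : Fin n) :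
    coeff (Finsupp.single j 1) (∑ k, c k • (X k : MvPolynomial (Fin n) K)) = c j := by
  classical
  rw [coeff_sum]
  simp only [coeff_smul, coeff_X', smul_eq_mul]
  rw [Finset.sum_eq_single j] <;> simp +contextual [Finsupp.single_left_inj, eq_comm]

private lemma coeff_single_mul {K : Type*} [Field K] {n : ℕ} (p q : MvPolynomial (Fin n) K)
    (j : Fin n) (hp : coeff 0 p = 0) :
    coeff (Finsupp.single j 1) (p * q) = coeff (Finsupp.single j 1) p * coeff 0 q := by
  classical
  rw [coeff_mul, Finsupp.antidiagonal_single]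
  rw [show (Finset.HasAntidiagonal.antidiagonal 1 : Finset (ℕ × ℕ)) = {(0,1),(1,0)} from rfl]
  simp [hp]

/-- If `g·xᵢ - xᵢ ∈ (α)` for an irreducible `α` in the maximal ideal and
every coordinate `xᵢ`, then `g` fixes a hyperplane pointwise (pseudoreflection or identity). -/
theorem pseudoreflection_of_coords {K : Type*} [Field K] [IsAlgClosed K] {n : ℕ}
    (g : GL (Fin n) K)
    (α : MvPolynomial (Fin n) K) (hirr : Irreducible α)
    (hα : α ∈ Ideal.span (Set.range (X : Fin n → MvPolynomial (Fin n) K)))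
    (h : ∀ i : Fin n, polyAct g (X i) - X i ∈ Ideal.span {α}) :
    n - 1 ≤ fixedDim ((g : Matrix (Fin n) (Fin n) K)) := by
  classical
  set Minv := ((g⁻¹ : GL (Fin n) K) : Matrix (Fin n) (Fin n) K) with hMinvdef
  -- write each `polyAct g (X i) - X i` as `α * q i`
  choose q hq using fun i => Ideal.mem_span_singleton.mp (h i)
  -- α has zero constant term
  have hα0 : coeff 0 α = 0 := by
    have hmem : ∀ m ∈ α.support, ∃ i ∈ (Set.univ : Set (Fin n)), (m : Fin n →₀ ℕ) i ≠ 0 :=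
      mem_ideal_span_X_image.mp (by simpa [Set.image_univ] using hα)
    by_contra h0
    obtain ⟨i, -, hi⟩ := hmem 0 (mem_support_iff.mpr h0)
    simp at hi
  set a : Fin n → K := fun j => coeff (Finsupp.single j 1) α with ha
  set d : Fin n → K := fun i => coeff 0 (q i) with hd
  -- the entries of `g⁻¹ - 1`
  have key : ∀ i k, Minv i k - (1 : Matrix (Fin n) (Fin n) K) i k = a k * d i := by
    intro i k
    have h1 : coeff (Finsupp.single k 1) (polyAct g (X i) - X i)
        = Minv i k - (1 : Matrix (Fin n) (Fin n) K) i k := by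
      rw [coeff_sub]
      have hact : polyAct g (X i) = ∑ j, Minv i j • (X j : MvPolynomial (Fin n) K) := by
        simp [polyAct, hMinvdef, Matrix.coe_units_inv]
      rw [hact, coeff_sum_smul_X]
      congr 1
      rw [coeff_X', Matrix.one_apply]
      by_cases hik : i = k
      · simp [hik]
      · rw [if_neg (by simpa [Finsupp.single_left_inj] using hik), if_neg hik]
    have h2 : coeff (Finsupp.single k 1) (α * q i) = a k * d i :=
      coeff_single_mul α (q i) k hα0
    rw [hq i, h2] at h1
    exact h1.symm
  -- hence `g⁻¹ - 1` and `g - 1` have rank at most 1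
  have hgMinv : ((g : Matrix (Fin n) (Fin n) K)) * Minv = 1 := by
    rw [hMinvdef]
    calc ((g : Matrix (Fin n) (Fin n) K)) * ((g⁻¹ : GL (Fin n) K) : Matrix (Fin n) (Fin n) K)
        = ((g * g⁻¹ : GL (Fin n) K) : Matrix (Fin n) (Fin n) K) := (Units.val_mul _ _).symm
      _ = 1 := by simp
  have heq : ((g : Matrix (Fin n) (Fin n) K)) - 1
      = ((g : Matrix (Fin n) (Fin n) K)) * vecMulVec (-d) a := by
    have hv : vecMulVec (-d) a = 1 - Minv := by
      ext i k
      have := key i k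
      simp only [vecMulVec_apply, Pi.neg_apply, Matrix.sub_apply]
      linear_combination this
    rw [hv, Matrix.mul_sub, hgMinv, mul_one]
  have hdet : IsUnit ((g : Matrix (Fin n) (Fin n) K)).det :=
    (Matrix.isUnit_iff_isUnit_det _).mp ⟨g, rfl⟩
  have hrank : (((g : Matrix (Fin n) (Fin n) K)) - 1).rank ≤ 1 := by
    rw [heq, Matrix.rank_mul_eq_right_of_isUnit_det _ _ hdet, Matrix.vecMulVec_eq (Fin 1)]
    refine (Matrix.rank_mul_le_left _ _).trans ?_
    exact (Matrix.rank_le_card_width _).trans (by simp)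
  -- rank-nullity
  have h3 := LinearMap.finrank_range_add_finrank_ker
    (Matrix.toLin' (((g : Matrix (Fin n) (Fin n) K)) - 1))
  have h4 : Module.finrank K
      (LinearMap.range (Matrix.toLin' (((g : Matrix (Fin n) (Fin n) K)) - 1)))
      = (((g : Matrix (Fin n) (Fin n) K)) - 1).rank := by
    rw [Matrix.toLin'_apply']; rfl
  have h5 : Module.finrank K (Fin n → K) = n := by simp
  unfold fixedDim
  omega
end

section
/- Let W be a vector space of dimension n over an algebraically closed field 𝕂, let G ≤ GL(W) be a finite group, and let H be a normal subgroup of G such that the invariant ring R = 𝕂[W]^H is a polynomial algebra on n homogeneous generators (so that W/H ≅ 𝔸ⁿ). Since H is normal, each g ∈ G restricts to a 𝕂-algebra automorphism of R. If g ∈ G is a pseudoreflection of W, then the ideal of R generated by the set {g·f − f : f ∈ R} has height at most 1; equivalently, the fixed-point set of the induced automorphism of W/H ≅ 𝔸ⁿ contains the origin and has codimension at most 1. In particular, if G is generated by pseudoreflections, then the induced action of G/H on W/H is generated by such generalized pseudoreflections. -/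
open MvPolynomial Matrix

/-- The ring of invariants `K[W]^G`. -/
noncomputable def invariants {K : Type*} [Field K] {n : ℕ} (G : Subgroup (GL (Fin n) K)) :
    Subalgebra K (MvPolynomial (Fin n) K) :=
  ⨅ g ∈ G, AlgHom.equalizer (polyAct g) (AlgHom.id K (MvPolynomial (Fin n) K))

/-- An `R`-algebra is polynomial if it is generated by algebraically independent elements. -/
def IsPolynomialAlgebra (R A : Type*) [CommRing R] [CommRing A] [Algebra R A] : Prop :=
  ∃ (m : ℕ) (v : Fin m → A), AlgebraicIndependent R v ∧ Algebra.adjoin R (Set.range v) = ⊤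
/-- The height of an ideal: the infimum of the heights of the primes containing it. -/
noncomputable def idealHeight {R : Type*} [CommRing R] (I : Ideal R) : ℕ∞ :=
  ⨅ P ∈ {P : PrimeSpectrum R | I ≤ P.asIdeal}, Order.height P

section Aux

variable {K : Type*} [Field K] {n : ℕ}

lemma polyAct_X (g : GL (Fin n) K) (i : Fin n) :
    polyAct g (X i) = ∑ j, ((g⁻¹ : GL (Fin n) K) : Matrix (Fin n) (Fin n) K) i j • X j :=
  aeval_X _ i

lemma polyAct_comp (g h : GL (Fin n) K) :
    (polyAct (K := K) g).comp (polyAct h) = polyAct (g * h) := by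
  apply MvPolynomial.algHom_ext
  intro i
  simp only [AlgHom.coe_comp, Function.comp_apply, polyAct_X, map_sum, _root_.map_smul,
    polyAct_X, _root_.mul_inv_rev, Units.val_mul, Matrix.mul_apply]
  simp only [Finset.smul_sum, Finset.sum_smul, smul_smul]
  rw [Finset.sum_comm]

lemma polyAct_polyAct (g h : GL (Fin n) K) (f : MvPolynomial (Fin n) K) :
    polyAct g (polyAct h f) = polyAct (g * h) f := by
  rw [← polyAct_comp]; rfl

lemma polyAct_one (f : MvPolynomial (Fin n) K) : polyAct (1 : GL (Fin n) K) f = f := by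
  have : polyAct (K := K) (n := n) 1 = AlgHom.id K _ := by
    apply MvPolynomial.algHom_ext
    intro i
    simp [polyAct_X, Matrix.one_apply, Finset.sum_ite_eq]
  rw [this]; rfl

lemma polyAct_injective (u : GL (Fin n) K) : Function.Injective (polyAct (K := K) u) := by
  intro x y hxy
  have := congrArg (polyAct u⁻¹) hxy
  rwa [polyAct_polyAct, polyAct_polyAct, inv_mul_cancel, polyAct_one, polyAct_one] at this

lemma mem_invariants {H : Subgroup (GL (Fin n) K)} {f : MvPolynomial (Fin n) K} :
    f ∈ invariants H ↔ ∀ h ∈ H, polyAct h f = f := by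
  simp only [invariants, Algebra.mem_iInf, AlgHom.mem_equalizer, AlgHom.id_apply]

lemma dvd_polyAct_sub (g : GL (Fin n) K) (ℓ : MvPolynomial (Fin n) K)
    (hX : ∀ i, ℓ ∣ polyAct g (X i) - X i) (p : MvPolynomial (Fin n) K) :
    ℓ ∣ polyAct g p - p := by
  induction p using MvPolynomial.induction_on with
  | C a => simp
  | add p q hp hq =>
    have : polyAct g (p + q) - (p + q) = (polyAct g p - p) + (polyAct g q - q) := by
      rw [map_add]; ring
    rw [this]; exact dvd_add hp hq
  | mul_X p i hp =>
    have : polyAct g (p * X i) - p * X i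
        = polyAct g p * (polyAct g (X i) - X i) + (polyAct g p - p) * X i := by
      rw [_root_.map_mul]; ring
    rw [this]
    exact dvd_add (Dvd.dvd.mul_left (hX i) _) (Dvd.dvd.mul_right hp _)

lemma exists_linear (g : GL (Fin n) K) (hpr : n - 1 ≤ fixedDim (g : Matrix (Fin n) (Fin n) K))
    (hg : (g : Matrix (Fin n) (Fin n) K) ≠ 1) :
    ∃ ℓ : MvPolynomial (Fin n) K, ℓ ≠ 0 ∧ (∀ i, ℓ ∣ polyAct g (X i) - X i) ∧
      constantCoeff ℓ = 0 := by
  classical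
  set M' : Matrix (Fin n) (Fin n) K := (g : Matrix (Fin n) (Fin n) K) - 1 with hM'
  have hrn : M'.rank + fixedDim (g : Matrix (Fin n) (Fin n) K) = n := by
    rw [Matrix.rank, fixedDim, Matrix.toLin'_apply']
    rw [LinearMap.finrank_range_add_finrank_ker]
    exact Module.finrank_fin_fun K
  have hn : 1 ≤ n := by
    rcases Nat.eq_zero_or_pos n with h0 | h
    · subst h0; exact absurd (Subsingleton.elim _ _) hg
    · exact h
  have hrank : M'.rank ≤ 1 := by omega
  set A : Matrix (Fin n) (Fin n) K := ((g⁻¹ : GL (Fin n) K) : Matrix (Fin n) (Fin n) K) with hA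
  set B : Matrix (Fin n) (Fin n) K := A - 1 with hB
  have hAg : A * (g : Matrix (Fin n) (Fin n) K) = 1 := by
    rw [hA, ← Units.val_mul, inv_mul_cancel, Units.val_one]
  have hBeq : B = (-A) * M' := by
    rw [hM', hB, neg_mul, mul_sub, hAg, mul_one, neg_sub]
  have hrankB : (Bᵀ).rank ≤ 1 := by
    rw [Matrix.rank_transpose, hBeq]
    exact le_trans (Matrix.rank_mul_le_right _ _) hrank
  have hprin : (LinearMap.range (Bᵀ).mulVecLin).IsPrincipal := by
    rw [← Submodule.finrank_le_one_iff_isPrincipal]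
    exact hrankB
  obtain ⟨w, hw⟩ := hprin.principal
  have hrow : ∀ i, ∃ c : K, c • w = B i := by
    intro i
    rw [← Submodule.mem_span_singleton, ← hw]
    refine ⟨Pi.single i 1, ?_⟩
    rw [Matrix.mulVecLin_apply, Matrix.mulVec_single]
    ext k
    simp [Matrix.transpose_apply]
  choose c hc using hrow
  have hBc : ∀ i j, B i j = c i * w j := by
    intro i j; rw [← hc i]; simp [Pi.smul_apply, smul_eq_mul]
  have hBne : B ≠ 0 := by
    intro h
    apply hg
    have : A = 1 := by rwa [hB, sub_eq_zero] at h
    have hginv : (g⁻¹ : GL (Fin n) K) = 1 := Units.ext this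
    have : g = 1 := by rwa [inv_eq_one] at hginv
    rw [this]; rfl
  obtain ⟨i₀, j₀, hij⟩ : ∃ i j, B i j ≠ 0 := by
    by_contra h
    push_neg at h
    exact hBne (by ext i j; exact h i j)
  have hwj : w j₀ ≠ 0 := fun h => hij (by rw [hBc, h, mul_zero])
  refine ⟨∑ j, w j • X j, ?_, ?_, ?_⟩
  · intro h
    have := congrArg (eval (Pi.single j₀ 1 : Fin n → K)) h
    simp only [map_sum, smul_eval, eval_X, map_zero] at this
    rw [Finset.sum_eq_single j₀ (by intro b _ hb; simp [Pi.single_apply, hb])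
      (by simp)] at this
    simp [Pi.single_apply] at this
    exact hwj this
  · intro i
    have hXi : (X i : MvPolynomial (Fin n) K) = ∑ j, ((1 : Matrix (Fin n) (Fin n) K) i j) • X j := by
      rw [Finset.sum_eq_single i (by intro b _ hb; simp [Matrix.one_apply, Ne.symm hb])
        (by simp)]
      simp [Matrix.one_apply]
    refine ⟨C (c i), ?_⟩
    rw [polyAct_X]
    conv_lhs => rw [hXi]
    rw [← Finset.sum_sub_distrib]
    rw [mul_comm, C_mul', Finset.smul_sum]
    congr 1
    ext j
    rw [← sub_smul, smul_smul, ← hBc]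
    rfl
  · rw [map_sum]
    apply Finset.sum_eq_zero
    intro j _
    simp

lemma prime_lt_span_eq_bot {R : Type*} [CommRing R] [IsDomain R] [WfDvdMonoid R]
    {π : R} (hπ : Prime π) {q : Ideal R} (hq : q.IsPrime) (hlt : q < Ideal.span {π}) :
    q = ⊥ := by
  by_contra hne
  obtain ⟨a, haq, ha0⟩ := Submodule.exists_mem_ne_zero_of_ne_bot hne
  have hwf : WellFounded (DvdNotUnit (α := R)) := wellFounded_dvdNotUnit
  set s : Set R := {a | a ∈ q ∧ a ≠ 0} with hs_def
  have hs : s.Nonempty := ⟨a, haq, ha0⟩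
  have hm : hwf.min s hs ∈ s := hwf.min_mem s hs
  set m := hwf.min s hs with hmdef
  have hπq : π ∉ q := fun h =>
    hlt.not_ge (Ideal.span_le.mpr (Set.singleton_subset_iff.mpr h))
  have hmem : m ∈ Ideal.span {π} := hlt.le hm.1
  obtain ⟨b, hb⟩ := Ideal.mem_span_singleton.mp hmem
  have hbq : b ∈ q := by
    rcases hq.mem_or_mem (hb ▸ hm.1) with h | h
    · exact absurd h hπq
    · exact h
  have hb0 : b ≠ 0 := by
    rintro rfl
    exact hm.2 (by rw [hb, mul_zero])
  exact hwf.not_lt_min s ⟨hbq, hb0⟩ ⟨hb0, π, hπ.not_isUnit, by rw [← hmdef, hb, mul_comm]⟩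

lemma height_span_singleton_le_one {R : Type*} [CommRing R] [IsDomain R] [WfDvdMonoid R]
    {π : R} (hπ : Prime π) (P : PrimeSpectrum R) (hP : P.asIdeal = Ideal.span {π}) :
    Order.height P ≤ 1 := by
  apply Order.height_le
  intro p hlast
  by_contra hlen
  push_neg at hlen
  have hlen2 : 2 ≤ p.length := by exact_mod_cast hlen
  have h1 : p ⟨p.length - 1, by omega⟩ < p.last := by
    apply p.strictMono
    simp only [RelSeries.last, Fin.lt_def, Fin.last]
    omega
  have h0 : p ⟨p.length - 2, by omega⟩ < p ⟨p.length - 1, by omega⟩ := by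
    apply p.strictMono
    simp only [Fin.lt_def]
    omega
  rw [hlast] at h1
  have hq1 : (p ⟨p.length - 1, by omega⟩).asIdeal < Ideal.span {π} := by
    rw [← hP]; exact h1
  have hbot : (p ⟨p.length - 1, by omega⟩).asIdeal = ⊥ :=
    prime_lt_span_eq_bot hπ (p ⟨p.length - 1, by omega⟩).isPrime hq1
  have : (p ⟨p.length - 2, by omega⟩).asIdeal < ⊥ := by
    rw [← hbot]; exact h0
  exact absurd this (by simp)

end Aux

/-- If `H ⊴ G`, `R = K[W]^H` is polynomial on `n` homogeneous generators,
and `g ∈ G` is a pseudoreflection (or the identity), then the ideal of `R` generated by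
`{g·f - f : f ∈ R}` has height at most `1`. -/
theorem height_le_one_of_pseudoreflection {K : Type*} [Field K] [IsAlgClosed K] {n : ℕ}
    (G H : Subgroup (GL (Fin n) K)) (hGfin : Finite G)
    (hHG : H ≤ G) (hnorm : ∀ g ∈ G, ∀ h ∈ H, g * h * g⁻¹ ∈ H)
    (v : Fin n → MvPolynomial (Fin n) K)
    (hhom : ∀ i, ∃ d : ℕ, (v i).IsHomogeneous d)
    (hind : AlgebraicIndependent K v)
    (hgen : Algebra.adjoin K (Set.range v) = invariants H)
    (g : GL (Fin n) K) (hgG : g ∈ G)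
    (hpr : n - 1 ≤ fixedDim ((g : Matrix (Fin n) (Fin n) K))) :
    idealHeight (Ideal.span
      {r : invariants H | ∃ f : invariants H,
        (r : MvPolynomial (Fin n) K) = polyAct g (f : MvPolynomial (Fin n) K) - f}) ≤ 1 := by
  classical
  set S : Set ↥(invariants H) := {r : invariants H | ∃ f : invariants H,
      (r : MvPolynomial (Fin n) K) = polyAct g (f : MvPolynomial (Fin n) K) - f} with hS_def
  have key : ∀ P : PrimeSpectrum ↥(invariants H),
      Ideal.span S ≤ P.asIdeal → Order.height P ≤ 1 →
      idealHeight (Ideal.span S) ≤ 1 := by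
    intro P h1 h2
    exact le_trans (iInf₂_le P h1) h2
  by_cases hg1 : (g : Matrix (Fin n) (Fin n) K) = 1
  · -- g acts trivially on everything
    have hge : g = 1 := Units.ext hg1
    have hact : ∀ f : MvPolynomial (Fin n) K, polyAct g f = f := by
      intro f; rw [hge]; exact polyAct_one f
    have hle : Ideal.span S ≤ (⊥ : Ideal ↥(invariants H)) := by
      rw [Ideal.span_le]
      rintro r ⟨f, hf⟩
      have h0 : (r : MvPolynomial (Fin n) K) = 0 := by rw [hf, hact, sub_self]
      have : r = 0 := Subtype.ext h0
      simp [this]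
    refine key ⊥ hle ?_
    have : Order.height (⊥ : PrimeSpectrum ↥(invariants H)) = 0 :=
      Order.height_eq_zero.mpr isMin_bot
    simp [this]
  · -- the pseudoreflection case
    obtain ⟨ℓ, hl0, hldvd, hlc⟩ := exists_linear g hpr hg1
    have hHfin : Finite ↥H := by
      have hGset : (G : Set (GL (Fin n) K)).Finite := Set.finite_coe_iff.mp hGfin
      exact Set.finite_coe_iff.mpr (hGset.subset hHG)
    letI : Fintype ↥H := Fintype.ofFinite _
    set N : MvPolynomial (Fin n) K := ∏ h : ↥H, polyAct (h : GL (Fin n) K) ℓ with hN_def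
    have hN0 : N ≠ 0 := by
      rw [hN_def]
      rw [Finset.prod_ne_zero_iff]
      intro h _ hz
      exact hl0 (polyAct_injective _ (by rw [hz, map_zero]))
    have hNinv : N ∈ invariants H := by
      rw [mem_invariants]
      intro h₀ hh₀
      rw [hN_def, map_prod]
      have : ∀ h : ↥H, polyAct h₀ (polyAct (h : GL (Fin n) K) ℓ)
          = polyAct (((⟨h₀, hh₀⟩ : ↥H) * h : ↥H) : GL (Fin n) K) ℓ := by
        intro h
        rw [polyAct_polyAct]
        rfl
      rw [Finset.prod_congr rfl fun h _ => this h]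
      exact Equiv.prod_comp (Equiv.mulLeft (⟨h₀, hh₀⟩ : ↥H))
        (fun h : ↥H => polyAct (h : GL (Fin n) K) ℓ)
    set NR : ↥(invariants H) := ⟨N, hNinv⟩ with hNR_def
    have hNRne : NR ≠ 0 := fun h => hN0 (congrArg Subtype.val h)
    have hlN : ℓ ∣ N := by
      have h1 : polyAct ((1 : ↥H) : GL (Fin n) K) ℓ = ℓ := by
        rw [OneMemClass.coe_one]; exact polyAct_one ℓ
      have h2 := Finset.dvd_prod_of_mem (fun h : ↥H => polyAct (h : GL (Fin n) K) ℓ)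
        (Finset.mem_univ (1 : ↥H))
      rw [h1] at h2
      exact h2
    have hNRnu : ¬IsUnit NR := by
      intro hu
      have hNu : IsUnit N := hu.map (invariants H).val
      have hlu : IsUnit ℓ := isUnit_of_dvd_unit hlN hNu
      have := hlu.map (constantCoeff (σ := Fin n) (R := K))
      rw [hlc] at this
      exact not_isUnit_zero this
    letI : UniqueFactorizationMonoid ↥(invariants H) := by
      have e : MvPolynomial (Fin n) K ≃ₐ[K] ↥(invariants H) :=
        hind.aevalEquiv.trans (Subalgebra.equivOfEq _ _ hgen)
      exact e.toRingEquiv.toMulEquiv.uniqueFactorizationMonoid inferInstance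
    obtain ⟨π, hπirr, hπdvd⟩ := WfDvdMonoid.exists_irreducible_factor hNRnu hNRne
    have hπ : Prime π := UniqueFactorizationMonoid.irreducible_iff_prime.mp hπirr
    refine key ⟨Ideal.span {π}, (Ideal.span_singleton_prime hπ.ne_zero).mpr hπ⟩ ?_
      (height_span_singleton_le_one hπ _ rfl)
    rw [Ideal.span_le]
    rintro r ⟨f, hf⟩
    rw [SetLike.mem_coe, Ideal.mem_span_singleton]
    set w : MvPolynomial (Fin n) K := polyAct g (f : MvPolynomial (Fin n) K) - f with hw_def
    have hrw : (r : MvPolynomial (Fin n) K) = w := hf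
    have hwinv : ∀ h ∈ H, polyAct h w = w := by
      intro h hh
      rw [← hrw]
      exact mem_invariants.mp r.2 h hh
    have hldw : ℓ ∣ w := dvd_polyAct_sub g ℓ hldvd _
    have hNdvd : N ∣ w ^ Fintype.card ↥H := by
      have hdvd : ∀ h : ↥H, polyAct (h : GL (Fin n) K) ℓ ∣ w := by
        intro h
        have := _root_.map_dvd (polyAct (h : GL (Fin n) K)) hldw
        rwa [hwinv _ h.2] at this
      have hstep : N ∣ ∏ _h : ↥H, w :=
        Finset.prod_dvd_prod_of_dvd (fun h : ↥H => polyAct (h : GL (Fin n) K) ℓ)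
          (fun _h : ↥H => w) (fun h _ => hdvd h)
      rwa [Finset.prod_const, Finset.card_univ] at hstep
    obtain ⟨t, ht⟩ := hNdvd
    have htinv : t ∈ invariants H := by
      rw [mem_invariants]
      intro h hh
      have h1 : N * polyAct h t = N * t := by
        have h2 : polyAct h (N * t) = polyAct h (w ^ Fintype.card ↥H) := by rw [← ht]
        rw [_root_.map_mul, map_pow, hwinv h hh, mem_invariants.mp hNinv h hh, ht] at h2
        exact h2
      exact (mul_left_cancel₀ hN0 h1)
    have hNRdvdr : NR ∣ r ^ Fintype.card ↥H := by
      refine ⟨⟨t, htinv⟩, Subtype.ext ?_⟩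
      push_cast
      rw [hrw]
      exact ht
    exact hπ.dvd_of_dvd_pow (dvd_trans hπdvd hNRdvdr)
end

section
/- Let 𝕂 be an algebraically closed field and n ≥ 1. Let g be a 𝕂-algebra automorphism of 𝕂[x₁,…,xₙ] with g(𝔪) ⊆ 𝔪 where 𝔪 = (x₁,…,xₙ), and let g' ∈ GL_n(𝕂) act linearly on 𝕂[y₁,…,yₙ]. Suppose there is a 𝕂-algebra isomorphism φ : 𝕂[[x₁,…,xₙ]] → 𝕂[[y₁,…,yₙ]] of the completed rings intertwining the induced actions, i.e., φ ∘ ĝ = ĝ' ∘ φ, where ĝ and ĝ' denote the induced automorphisms of the formal power series rings. If there exists an irreducible polynomial α ∈ 𝔪 such that g·f − f ∈ (α) for every f ∈ 𝕂[x₁,…,xₙ], then g' is a pseudoreflection or the identity, i.e., dim ker(g' − E) ≥ n − 1. -/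
section Aux
open MvPowerSeries

lemma Finsupp.degree_add' {n : ℕ} (u v : Fin n →₀ ℕ) :
    (u + v).degree = u.degree + v.degree := by
  simp [Finsupp.degree_eq_weight_one, map_add]

variable {K : Type*} [Field K] {n : ℕ}

/-- The ideal of power series of order `≥ k`. -/
def NN (K : Type*) [Field K] (n k : ℕ) : Ideal (MvPowerSeries (Fin n) K) where
  carrier := {F | ∀ d : Fin n →₀ ℕ, d.degree < k → MvPowerSeries.coeff d F = 0}
  add_mem' := by intro a b ha hb d hd; rw [map_add, ha d hd, hb d hd, add_zero]
  zero_mem' := by intro d hd; simp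
  smul_mem' := by
    intro c F hF d hd
    rw [smul_eq_mul, MvPowerSeries.coeff_mul]
    apply Finset.sum_eq_zero
    rintro ⟨u, v⟩ huv
    rw [Finset.HasAntidiagonal.mem_antidiagonal] at huv
    have hv : v.degree ≤ d.degree := by
      rw [← huv, Finsupp.degree_add']; exact Nat.le_add_left _ _
    rw [hF v (lt_of_le_of_lt hv hd), mul_zero]

lemma mem_NN_iff {k : ℕ} {F : MvPowerSeries (Fin n) K} :
    F ∈ NN K n k ↔ ∀ d : Fin n →₀ ℕ, d.degree < k → MvPowerSeries.coeff d F = 0 :=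
  Iff.rfl

lemma NN_anti {k l : ℕ} (h : k ≤ l) : NN K n l ≤ NN K n k := by
  intro F hF d hd; exact hF d (lt_of_lt_of_le hd h)

lemma mul_mem_NN {a b : ℕ} {F G : MvPowerSeries (Fin n) K}
    (hF : F ∈ NN K n a) (hG : G ∈ NN K n b) : F * G ∈ NN K n (a + b) := by
  intro d hd
  rw [MvPowerSeries.coeff_mul]
  apply Finset.sum_eq_zero
  rintro ⟨u, v⟩ huv
  rw [Finset.HasAntidiagonal.mem_antidiagonal] at huv
  have : u.degree + v.degree < a + b := by
    rw [← Finsupp.degree_add', huv]; exact hd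
  rcases lt_or_ge u.degree a with hu | hu
  · rw [hF u hu, zero_mul]
  · rw [hG v (by omega), mul_zero]

lemma span_X_le_NN_one :
    Ideal.span (Set.range (MvPowerSeries.X : Fin n → MvPowerSeries (Fin n) K)) ≤ NN K n 1 := by
  rw [Ideal.span_le]
  rintro _ ⟨i, rfl⟩
  intro d hd
  have hd0 : d = 0 := by
    rwa [Nat.lt_one_iff, Finsupp.degree_eq_zero_iff] at hd
  subst hd0
  rw [MvPowerSeries.coeff_zero_eq_constantCoeff_apply, MvPowerSeries.constantCoeff_X]

lemma pow_span_X_le_NN (k : ℕ) :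
    (Ideal.span (Set.range (MvPowerSeries.X : Fin n → MvPowerSeries (Fin n) K))) ^ k ≤ NN K n k := by
  induction k with
  | zero => intro F _ d hd; omega
  | succ k ih =>
    rw [pow_succ]
    apply Ideal.mul_le.mpr
    intro F hF G hG
    exact mul_mem_NN (ih hF) (span_X_le_NN_one hG)

lemma Finsupp.degree_single' {n : ℕ} (i : Fin n) (m : ℕ) :
    (Finsupp.single i m : Fin n →₀ ℕ).degree = m := by
  rcases eq_or_ne m 0 with rfl | hm
  · simp [Finsupp.degree]
  · exact Finsupp.degree_single i m

lemma NN_le_pow_span_X (k : ℕ) :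
    NN K n k ≤ (Ideal.span (Set.range (MvPowerSeries.X : Fin n → MvPowerSeries (Fin n) K))) ^ k := by
  classical
  induction k with
  | zero => simp
  | succ k ih =>
    intro F hF
    set G : Fin n → MvPowerSeries (Fin n) K := fun i d =>
      if ∀ l, l < i → d l = 0 then MvPowerSeries.coeff (d + Finsupp.single i 1) F else 0 with hGdef
    have hGcoeff : ∀ i d, MvPowerSeries.coeff d (G i) =
        if ∀ l, l < i → d l = 0 then MvPowerSeries.coeff (d + Finsupp.single i 1) F else 0 :=
      fun i d => rfl
    have hGmem : ∀ i, G i ∈ NN K n k := by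
      intro i d hd
      rw [hGcoeff]
      split
      · apply hF
        rw [Finsupp.degree_add', Finsupp.degree_single']
        omega
      · rfl
    have hdecomp : F = ∑ i, MvPowerSeries.X i * G i := by
      ext d
      rw [map_sum]
      have hterm : ∀ i, MvPowerSeries.coeff d (MvPowerSeries.X i * G i) =
          if d i ≠ 0 ∧ (∀ l, l < i → d l = 0) then MvPowerSeries.coeff d F else 0 := by
        intro i
        rw [show (MvPowerSeries.X i : MvPowerSeries (Fin n) K)
            = MvPowerSeries.monomial (Finsupp.single i 1) 1 from rfl,
          MvPowerSeries.coeff_monomial_mul, hGcoeff]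
        rcases eq_or_ne (d i) 0 with hdi | hdi
        · rw [if_neg, if_neg]
          · simp [hdi]
          · rw [Finsupp.single_le_iff, hdi]; omega
        · rw [if_pos (by rw [Finsupp.single_le_iff]; omega), one_mul]
          have hsub : ∀ l, l < i → (d - Finsupp.single i 1 : Fin n →₀ ℕ) l = d l := by
            intro l hl
            rw [Finsupp.tsub_apply, Finsupp.single_apply,
              if_neg (fun hli => absurd hli (ne_of_gt hl))]
            omega
          have hcancel : d - Finsupp.single i 1 + Finsupp.single i 1 = d :=
            tsub_add_cancel_of_le (Finsupp.single_le_iff.mpr (by omega))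
          by_cases hcond : ∀ l, l < i → d l = 0
          · rw [if_pos, if_pos ⟨hdi, hcond⟩, hcancel]
            intro l hl; rw [hsub l hl]; exact hcond l hl
          · rw [if_neg, if_neg (by tauto)]
            intro hc
            exact hcond (fun l hl => by rw [← hsub l hl]; exact hc l hl)
      rcases eq_or_ne d 0 with rfl | hd0
      · rw [hF 0 (by simp [Finsupp.degree]), Finset.sum_eq_zero]
        intro i _
        rw [hterm i, if_neg (by simp)]
      · have hsupp : d.support.Nonempty := by
          rw [Finsupp.support_nonempty_iff]; exact hd0
        set i0 := d.support.min' hsupp with hi0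
        have hi0mem : i0 ∈ d.support := d.support.min'_mem hsupp
        have hi0ne : d i0 ≠ 0 := Finsupp.mem_support_iff.mp hi0mem
        have hi0min : ∀ l, l < i0 → d l = 0 := by
          intro l hl
          by_contra hne
          have := d.support.min'_le l (Finsupp.mem_support_iff.mpr hne)
          omega
        rw [Finset.sum_eq_single i0]
        · rw [hterm i0, if_pos ⟨hi0ne, hi0min⟩]
        · intro i _ hne
          rw [hterm i, if_neg]
          rintro ⟨hdi, hmin⟩
          rcases lt_trichotomy i i0 with hlt | heq | hgt
          · exact hdi (hi0min i hlt)
          · exact hne heq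
          · exact hi0ne (hmin i0 hgt)
        · intro hmem; exact absurd (Finset.mem_univ i0) hmem
    rw [hdecomp]
    apply Ideal.sum_mem
    intro i _
    rw [pow_succ']
    exact Ideal.mul_mem_mul (Ideal.subset_span ⟨i, rfl⟩) (ih (hGmem i))

noncomputable def hslice (m : ℕ) (F : MvPowerSeries (Fin n) K) : MvPolynomial (Fin n) K :=
  ∑ d ∈ (Finsupp.finite_of_degree_le (σ := Fin n) m).toFinset.filter (fun d => d.degree = m),
    MvPolynomial.monomial d (MvPowerSeries.coeff d F)

lemma coeff_slice (m : ℕ) (F : MvPowerSeries (Fin n) K) (d : Fin n →₀ ℕ) :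
    MvPolynomial.coeff d (hslice m F) =
      if d.degree = m then MvPowerSeries.coeff d F else 0 := by
  classical
  rw [hslice, MvPolynomial.coeff_sum]
  simp_rw [MvPolynomial.coeff_monomial]
  rcases eq_or_ne d.degree m with hd | hd
  · rw [if_pos hd, Finset.sum_eq_single d]
    · rw [if_pos rfl]
    · intro b _ hbd; rw [if_neg (fun hc => hbd hc)]
    · intro hmem
      exfalso; apply hmem
      rw [Finset.mem_filter, Set.Finite.mem_toFinset]
      exact ⟨le_of_eq hd, hd⟩
  · rw [if_neg hd, Finset.sum_eq_zero]
    intro b hb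
    rw [Finset.mem_filter] at hb
    rw [if_neg]
    intro hc; subst hc; exact hd hb.2

lemma order_mul_le {f g : MvPowerSeries (Fin n) K} (hf : f ≠ 0) (hg : g ≠ 0) :
    (f * g).order ≤ f.order + g.order := by
  classical
  obtain ⟨of, hof⟩ : ∃ of : ℕ, f.order = of :=
    ⟨f.order.toNat, ((MvPowerSeries.ne_zero_iff_order_finite).mp hf).symm⟩
  obtain ⟨og, hog⟩ : ∃ og : ℕ, g.order = og :=
    ⟨g.order.toNat, ((MvPowerSeries.ne_zero_iff_order_finite).mp hg).symm⟩
  set p := hslice of f with hp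
  set q := hslice og g with hq
  have hpne : p ≠ 0 := by
    obtain ⟨d0, hd0ne, hd0deg⟩ := MvPowerSeries.exists_coeff_ne_zero_and_order
      ((MvPowerSeries.ne_zero_iff_order_finite).mp hf)
    rw [hof] at hd0deg
    have hdeg : d0.degree = of := by exact_mod_cast hd0deg
    intro hc
    have := coeff_slice of f d0
    rw [← hp, hc, if_pos hdeg] at this
    exact hd0ne (by simpa using this.symm)
  have hqne : q ≠ 0 := by
    obtain ⟨d0, hd0ne, hd0deg⟩ := MvPowerSeries.exists_coeff_ne_zero_and_order
      ((MvPowerSeries.ne_zero_iff_order_finite).mp hg)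
    rw [hog] at hd0deg
    have hdeg : d0.degree = og := by exact_mod_cast hd0deg
    intro hc
    have := coeff_slice og g d0
    rw [← hq, hc, if_pos hdeg] at this
    exact hd0ne (by simpa using this.symm)
  have hpq : p * q ≠ 0 := mul_ne_zero hpne hqne
  obtain ⟨d, hd⟩ := MvPolynomial.ne_zero_iff.mp hpq
  -- degree d = of + og
  have hdd : d.degree = of + og := by
    rw [MvPolynomial.coeff_mul] at hd
    obtain ⟨⟨u, v⟩, huv, hne⟩ := Finset.exists_ne_zero_of_sum_ne_zero hd
    rw [Finset.HasAntidiagonal.mem_antidiagonal] at huv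
    dsimp only at huv hne
    have hu : u.degree = of := by
      by_contra hc
      rw [hp, coeff_slice of f u, if_neg hc] at hne
      simp at hne
    have hv : v.degree = og := by
      by_contra hc
      rw [hq, coeff_slice og g v, if_neg hc] at hne
      simp at hne
    rw [← huv, Finsupp.degree_add', hu, hv]
  -- coeff d (f * g) = coeff d (p * q) ≠ 0
  have hcoeff : MvPowerSeries.coeff d (f * g) = MvPolynomial.coeff d (p * q) := by
    rw [MvPowerSeries.coeff_mul, MvPolynomial.coeff_mul]
    apply Finset.sum_congr rfl
    rintro ⟨u, v⟩ huv
    rw [Finset.HasAntidiagonal.mem_antidiagonal] at huv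
    dsimp only at huv ⊢
    have hsum : u.degree + v.degree = of + og := by
      rw [← Finsupp.degree_add', huv, hdd]
    rw [hp, hq, coeff_slice of f u, coeff_slice og g v]
    rcases eq_or_ne u.degree of with hu | hu
    · have hv : v.degree = og := by omega
      rw [if_pos hu, if_pos hv]
    · rcases lt_or_gt_of_ne hu with hlt | hgt
      · have : MvPowerSeries.coeff u f = 0 := by
          apply MvPowerSeries.coeff_of_lt_order
          rw [hof]; exact_mod_cast hlt
        rw [this, if_neg hu, zero_mul, zero_mul]
      · have hvlt : v.degree < og := by omega
        have : MvPowerSeries.coeff v g = 0 := by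
          apply MvPowerSeries.coeff_of_lt_order
          rw [hog]; exact_mod_cast hvlt
        rw [this, mul_zero, if_neg (show ¬v.degree = og by omega), mul_zero]
  have : MvPowerSeries.coeff d (f * g) ≠ 0 := by rw [hcoeff]; exact hd
  calc (f * g).order ≤ d.degree := MvPowerSeries.order_le this
  _ = ((of + og : ℕ) : ℕ∞) := by exact_mod_cast hdd
  _ = f.order + g.order := by rw [hof, hog]; exact_mod_cast rfl

lemma mem_NN_of_mul {a f : MvPowerSeries (Fin n) K} (ha : a ≠ 0) {o k : ℕ}
    (hao : a.order = (o : ℕ∞)) (h : a * f ∈ NN K n k) : f ∈ NN K n (k - o) := by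
  rcases eq_or_ne f 0 with rfl | hf
  · exact Submodule.zero_mem _
  obtain ⟨of, hof⟩ : ∃ of : ℕ, f.order = of :=
    ⟨f.order.toNat, ((MvPowerSeries.ne_zero_iff_order_finite).mp hf).symm⟩
  have h1 : (k : ℕ∞) ≤ (a * f).order := MvPowerSeries.nat_le_order (fun d hd => h d (by exact_mod_cast hd))
  have h2 : (a * f).order ≤ (o : ℕ∞) + of := by
    rw [← hao, ← hof]; exact order_mul_le ha hf
  have hk : k ≤ o + of := by exact_mod_cast h1.trans h2
  intro d hd
  apply MvPowerSeries.coeff_of_lt_order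
  rw [hof]
  exact_mod_cast by omega

lemma dvd_of_forall_NN {a D : MvPowerSeries (Fin n) K} (ha : a ≠ 0)
    (h : ∀ k : ℕ, ∃ q, D - a * q ∈ NN K n k) : a ∣ D := by
  classical
  obtain ⟨o, hao⟩ : ∃ o : ℕ, a.order = o :=
    ⟨a.order.toNat, ((MvPowerSeries.ne_zero_iff_order_finite).mp ha).symm⟩
  choose q hq using h
  have hstab : ∀ (k1 k2 : ℕ), k1 ≤ k2 → ∀ d : Fin n →₀ ℕ, d.degree + o < k1 →
      MvPowerSeries.coeff d (q k1) = MvPowerSeries.coeff d (q k2) := by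
    intro k1 k2 hk d hd
    have hmem : a * (q k1 - q k2) ∈ NN K n k1 := by
      have heq : a * (q k1 - q k2) = (D - a * q k2) - (D - a * q k1) := by ring
      rw [heq]
      exact Submodule.sub_mem _ (NN_anti hk (hq k2)) (hq k1)
    have hz := mem_NN_of_mul ha hao hmem d (by omega)
    rwa [map_sub, sub_eq_zero] at hz
  set Q : MvPowerSeries (Fin n) K :=
    (fun d => MvPowerSeries.coeff d (q (d.degree + o + 1))) with hQdef
  have hQ : ∀ (d : Fin n →₀ ℕ) (k : ℕ), d.degree + o < k →
      MvPowerSeries.coeff d Q = MvPowerSeries.coeff d (q k) := by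
    intro d k hk
    have h0 : MvPowerSeries.coeff d Q = MvPowerSeries.coeff d (q (d.degree + o + 1)) := rfl
    rw [h0]
    exact hstab _ k (by omega) d (by omega)
  refine ⟨Q, ?_⟩
  ext d
  set k := d.degree + o + 1 with hk
  have h1 : MvPowerSeries.coeff d (a * Q) = MvPowerSeries.coeff d (a * q k) := by
    rw [MvPowerSeries.coeff_mul, MvPowerSeries.coeff_mul]
    apply Finset.sum_congr rfl
    rintro ⟨u, v⟩ huv
    rw [Finset.HasAntidiagonal.mem_antidiagonal] at huv
    dsimp only at huv ⊢
    rw [hQ v k]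
    have : v.degree ≤ d.degree := by
      rw [← huv, Finsupp.degree_add']; exact Nat.le_add_left _ _
    omega
  have h2 := hq k d (by omega)
  rw [map_sub, sub_eq_zero] at h2
  rw [h2, h1]

noncomputable def truncP (k : ℕ) (F : MvPowerSeries (Fin n) K) : MvPolynomial (Fin n) K :=
  ∑ d ∈ (Finsupp.finite_of_degree_le (σ := Fin n) k).toFinset.filter (fun d => d.degree < k),
    MvPolynomial.monomial d (MvPowerSeries.coeff d F)

lemma coeff_truncP (k : ℕ) (F : MvPowerSeries (Fin n) K) (d : Fin n →₀ ℕ) :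
    MvPolynomial.coeff d (truncP k F) =
      if d.degree < k then MvPowerSeries.coeff d F else 0 := by
  classical
  rw [truncP, MvPolynomial.coeff_sum]
  simp_rw [MvPolynomial.coeff_monomial]
  rcases lt_or_ge d.degree k with hd | hd
  · rw [if_pos hd, Finset.sum_eq_single d]
    · rw [if_pos rfl]
    · intro b _ hbd; rw [if_neg (fun hc => hbd hc)]
    · intro hmem
      exfalso; apply hmem
      rw [Finset.mem_filter, Set.Finite.mem_toFinset]
      exact ⟨by simp only [Set.mem_setOf_eq]; omega, hd⟩
  · rw [if_neg (show ¬ d.degree < k by omega), Finset.sum_eq_zero]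
    intro b hb
    rw [Finset.mem_filter] at hb
    rw [if_neg]
    intro hc; subst hc; omega

lemma key_dvd (g : MvPolynomial (Fin n) K ≃ₐ[K] MvPolynomial (Fin n) K)
    (ghat : MvPowerSeries (Fin n) K ≃ₐ[K] MvPowerSeries (Fin n) K)
    (hext : ∀ f : MvPolynomial (Fin n) K,
      ghat (f : MvPowerSeries (Fin n) K) = ((g f : MvPolynomial (Fin n) K) : MvPowerSeries (Fin n) K))
    (hcont : ∀ k : ℕ,
      ∀ F ∈ (Ideal.span (Set.range (MvPowerSeries.X : Fin n → MvPowerSeries (Fin n) K))) ^ k,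
      ghat F ∈ (Ideal.span (Set.range (MvPowerSeries.X : Fin n → MvPowerSeries (Fin n) K))) ^ k)
    (α : MvPolynomial (Fin n) K) (hα0 : α ≠ 0)
    (h : ∀ f : MvPolynomial (Fin n) K, g f - f ∈ Ideal.span {α})
    (H : MvPowerSeries (Fin n) K) :
    ((α : MvPowerSeries (Fin n) K)) ∣ (ghat H - H) := by
  have ha : (α : MvPowerSeries (Fin n) K) ≠ 0 := by
    rw [Ne, MvPolynomial.coe_eq_zero_iff]; exact hα0
  apply dvd_of_forall_NN ha
  intro k
  set p := truncP k H with hp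
  obtain ⟨c, hc⟩ : α ∣ (g p - p) := (Ideal.mem_span_singleton).mp (h p)
  refine ⟨(c : MvPowerSeries (Fin n) K), ?_⟩
  have hHp : H - (p : MvPowerSeries (Fin n) K) ∈ NN K n k := by
    intro d hd
    rw [map_sub, MvPolynomial.coeff_coe, coeff_truncP, if_pos hd, sub_self]
  have hgc : ((g p : MvPolynomial (Fin n) K) : MvPowerSeries (Fin n) K)
      - (p : MvPowerSeries (Fin n) K)
      = (α : MvPowerSeries (Fin n) K) * (c : MvPowerSeries (Fin n) K) := by
    rw [← MvPolynomial.coe_mul, ← hc]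
    have : ∀ f : MvPolynomial (Fin n) K, (f : MvPowerSeries (Fin n) K)
        = MvPolynomial.coeToMvPowerSeries.ringHom f := fun _ => rfl
    rw [this (g p - p), this (g p), this p, ← map_sub]
  have hgoal : (ghat H - H) - (α : MvPowerSeries (Fin n) K) * (c : MvPowerSeries (Fin n) K)
      = ghat (H - (p : MvPowerSeries (Fin n) K)) - (H - (p : MvPowerSeries (Fin n) K)) := by
    rw [map_sub, hext p, ← hgc]; ring
  rw [hgoal]
  exact Submodule.sub_mem _
    (pow_span_X_le_NN k (hcont k _ (NN_le_pow_span_X k hHp)))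
    (pow_span_X_le_NN k (NN_le_pow_span_X k hHp))

lemma coeff_single_one_mul {β h : MvPowerSeries (Fin n) K}
    (hβ : MvPowerSeries.constantCoeff β = 0) (j : Fin n) :
    MvPowerSeries.coeff (Finsupp.single j 1) (β * h) =
      MvPowerSeries.coeff (Finsupp.single j 1) β *
        MvPowerSeries.constantCoeff h := by
  classical
  rw [MvPowerSeries.coeff_mul, Finsupp.antidiagonal_single, Finset.sum_map]
  rw [show Finset.HasAntidiagonal.antidiagonal (1 : ℕ) = {(0, 1), (1, 0)} from rfl]
  rw [Finset.sum_insert (by decide), Finset.sum_singleton]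
  simp only [Function.Embedding.prodMap, Function.Embedding.coeFn_mk, Prod.map_apply]
  rw [Finsupp.single_zero, MvPowerSeries.coeff_zero_eq_constantCoeff_apply, hβ,
    MvPowerSeries.coeff_zero_eq_constantCoeff_apply, zero_mul, zero_add]

lemma rank_bound {c b : Fin n → K} {A : Matrix (Fin n) (Fin n) K}
    (hA : ∀ i j, A i j = c i * b j) :
    n - 1 ≤ Module.finrank K (LinearMap.ker (Matrix.toLin' A)) := by
  have hrange : LinearMap.range (Matrix.toLin' A) ≤ Submodule.span K {c} := by
    rintro _ ⟨v, rfl⟩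
    have hv : Matrix.toLin' A v = (∑ j, b j * v j) • c := by
      ext i
      rw [Matrix.toLin'_apply, Pi.smul_apply, smul_eq_mul]
      calc A.mulVec v i = ∑ j, c i * b j * v j := by
            simp [Matrix.mulVec, dotProduct, hA]
      _ = (∑ j, b j * v j) * c i := by
            rw [Finset.sum_mul]; apply Finset.sum_congr rfl; intros; ring
    exact Submodule.mem_span_singleton.mpr ⟨_, hv.symm⟩
  have h1 : Module.finrank K ↥(LinearMap.range (Matrix.toLin' A)) ≤ 1 := by
    refine le_trans (Submodule.finrank_mono hrange) ?_
    rcases eq_or_ne c 0 with rfl | hc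
    · rw [Submodule.span_zero_singleton]
      simp
    · rw [finrank_span_singleton hc]
  have h2 := LinearMap.finrank_range_add_finrank_ker (Matrix.toLin' A)
  rw [Module.finrank_pi] at h2
  simp only [Fintype.card_fin] at h2
  omega

end Aux


open MvPolynomial Matrix

/-- Suppose a local algebra automorphism `g` of `K[x₁,…,xₙ]` and a linear
`g' ∈ GLₙ(K)` induce equivalent actions on the completed power series rings (via an
isomorphism `φ` with `φ ∘ ĝ = ĝ' ∘ φ`, where `ĝ, ĝ'` are the induced automorphisms,
i.e. the continuous extensions).  If `g·f - f ∈ (α)` for some irreducible `α` in the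
maximal ideal and all polynomials `f`, then `g'` is a pseudoreflection or the identity. -/
theorem linearized_is_pseudoreflection {K : Type*} [Field K] [IsAlgClosed K] {n : ℕ}
    (hn : 1 ≤ n)
    (g : MvPolynomial (Fin n) K ≃ₐ[K] MvPolynomial (Fin n) K)
    (hgm : ∀ f ∈ Ideal.span (Set.range (X : Fin n → MvPolynomial (Fin n) K)),
      g f ∈ Ideal.span (Set.range (X : Fin n → MvPolynomial (Fin n) K)))
    (g' : GL (Fin n) K)
    (ghat ghat' : MvPowerSeries (Fin n) K ≃ₐ[K] MvPowerSeries (Fin n) K)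
    (hext : ∀ f : MvPolynomial (Fin n) K,
      ghat (f : MvPowerSeries (Fin n) K) = ((g f : MvPolynomial (Fin n) K) : MvPowerSeries (Fin n) K))
    (hcont : ∀ k : ℕ,
      ∀ F ∈ (Ideal.span (Set.range (MvPowerSeries.X : Fin n → MvPowerSeries (Fin n) K))) ^ k,
      ghat F ∈ (Ideal.span (Set.range (MvPowerSeries.X : Fin n → MvPowerSeries (Fin n) K))) ^ k)
    (hext' : ∀ f : MvPolynomial (Fin n) K,
      ghat' (f : MvPowerSeries (Fin n) K) =
        ((polyAct g' f : MvPolynomial (Fin n) K) : MvPowerSeries (Fin n) K))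
    (hcont' : ∀ k : ℕ,
      ∀ F ∈ (Ideal.span (Set.range (MvPowerSeries.X : Fin n → MvPowerSeries (Fin n) K))) ^ k,
      ghat' F ∈ (Ideal.span (Set.range (MvPowerSeries.X : Fin n → MvPowerSeries (Fin n) K))) ^ k)
    (φ : MvPowerSeries (Fin n) K ≃ₐ[K] MvPowerSeries (Fin n) K)
    (hφ : ∀ F : MvPowerSeries (Fin n) K, φ (ghat F) = ghat' (φ F))
    (α : MvPolynomial (Fin n) K) (hirr : Irreducible α)
    (hα : α ∈ Ideal.span (Set.range (X : Fin n → MvPolynomial (Fin n) K)))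
    (h : ∀ f : MvPolynomial (Fin n) K, g f - f ∈ Ideal.span {α}) :
    n - 1 ≤ fixedDim ((g' : Matrix (Fin n) (Fin n) K)) := by
  classical
  have hα0 : α ≠ 0 := hirr.ne_zero
  set a : MvPowerSeries (Fin n) K := (α : MvPowerSeries (Fin n) K) with hadef
  set β : MvPowerSeries (Fin n) K := φ a with hβdef
  -- the constant coefficient of `a` vanishes
  have hconsta : MvPowerSeries.constantCoeff a = 0 := by
    rw [hadef, ← MvPowerSeries.coeff_zero_eq_constantCoeff_apply, MvPolynomial.coeff_coe]
    have hker : α ∈ RingHom.ker (MvPolynomial.constantCoeff :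
        MvPolynomial (Fin n) K →+* K) := by
      apply Ideal.span_le.mpr ?_ hα
      rintro _ ⟨i, rfl⟩
      simp [RingHom.mem_ker, MvPolynomial.constantCoeff_X]
    rw [RingHom.mem_ker, MvPolynomial.constantCoeff_eq] at hker
    exact hker
  -- the constant coefficient of `β` vanishes
  have hβ0 : MvPowerSeries.constantCoeff β = 0 := by
    by_contra hne
    have hu : IsUnit β := MvPowerSeries.isUnit_iff_constantCoeff.mpr
      (isUnit_iff_ne_zero.mpr hne)
    have hua : IsUnit a := by
      have := hu.map φ.symm
      rwa [hβdef, AlgEquiv.symm_apply_apply] at this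
    have h0 := MvPowerSeries.isUnit_constantCoeff a hua
    rw [hconsta] at h0
    exact not_isUnit_zero h0
  set m : Matrix (Fin n) (Fin n) K := ((g'⁻¹ : GL (Fin n) K) : Matrix (Fin n) (Fin n) K)
    with hmdef
  -- the key relation for each variable
  have key : ∀ i : Fin n, ∃ w : MvPowerSeries (Fin n) K,
      ((polyAct g' (X i) : MvPolynomial (Fin n) K) : MvPowerSeries (Fin n) K)
        - MvPowerSeries.X i = β * w := by
    intro i
    obtain ⟨w, hw⟩ := key_dvd g ghat hext hcont α hα0 h (φ.symm (MvPowerSeries.X i))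
    refine ⟨φ w, ?_⟩
    have h1 : φ (ghat (φ.symm (MvPowerSeries.X i))) = ghat' (MvPowerSeries.X i) := by
      rw [hφ, AlgEquiv.apply_symm_apply]
    have h2 : ghat' (MvPowerSeries.X (σ := Fin n) (R := K) i)
        = ((polyAct g' (X i) : MvPolynomial (Fin n) K) : MvPowerSeries (Fin n) K) := by
      rw [← MvPolynomial.coe_X, hext']
    have := congrArg φ hw
    rw [map_sub, _root_.map_mul, h1, h2, AlgEquiv.apply_symm_apply, ← hβdef] at this
    exact this
  choose w hwspec using key
  set cvec : Fin n → K := fun i => MvPowerSeries.constantCoeff (w i) with hcvec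
  set bvec : Fin n → K := fun j => MvPowerSeries.coeff (Finsupp.single j 1) β with hbvec
  -- entries of `m - 1`
  have hmatrix : ∀ i j, (m - 1) i j = cvec i * bvec j := by
    intro i j
    have hco := congrArg (MvPowerSeries.coeff (Finsupp.single j 1)) (hwspec i)
    rw [map_sub, coeff_single_one_mul hβ0, MvPolynomial.coeff_coe] at hco
    have hpoly : polyAct g' (X i) = ∑ j', m i j' • (X j' : MvPolynomial (Fin n) K) := by
      simp only [polyAct, MvPolynomial.aeval_X, hmdef]
    rw [hpoly] at hco
    have hL : MvPolynomial.coeff (Finsupp.single j 1)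
        (∑ j', m i j' • (X j' : MvPolynomial (Fin n) K)) = m i j := by
      rw [MvPolynomial.coeff_sum]
      simp_rw [MvPolynomial.coeff_smul, MvPolynomial.coeff_X']
      rw [Finset.sum_eq_single j]
      · rw [if_pos rfl, smul_eq_mul, mul_one]
      · intro b _ hbj
        rw [if_neg (fun hc => hbj ((Finsupp.single_left_inj (one_ne_zero)).mp hc)), smul_zero]
      · intro hmem; exact absurd (Finset.mem_univ j) hmem
    have hR : MvPowerSeries.coeff (Finsupp.single j 1)
        (MvPowerSeries.X (σ := Fin n) (R := K) i) = (1 : Matrix (Fin n) (Fin n) K) i j := by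
      rw [MvPowerSeries.coeff_X, Matrix.one_apply]
      by_cases hij : i = j
      · subst hij; rw [if_pos rfl, if_pos rfl]
      · rw [if_neg (fun hc => hij ((Finsupp.single_left_inj (one_ne_zero)).mp hc).symm),
          if_neg hij]
    rw [hL, hR] at hco
    rw [Matrix.sub_apply, hco, hcvec, hbvec]
    ring
  -- kernels agree
  have hg'm : ((g' : Matrix (Fin n) (Fin n) K)) * m = 1 := g'.mul_inv
  have hmg' : m * ((g' : Matrix (Fin n) (Fin n) K)) = 1 := g'.inv_mul
  have hE : ∀ v : Fin n → K,
      ((g' : Matrix (Fin n) (Fin n) K) - 1).mulVec v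
        = -((g' : Matrix (Fin n) (Fin n) K).mulVec ((m - 1).mulVec v)) := by
    intro v
    rw [Matrix.mulVec_mulVec, mul_sub, mul_one, hg'm, Matrix.sub_mulVec,
      Matrix.sub_mulVec, Matrix.one_mulVec, neg_sub]
  have hker : LinearMap.ker (Matrix.toLin' ((g' : Matrix (Fin n) (Fin n) K) - 1))
      = LinearMap.ker (Matrix.toLin' (m - 1)) := by
    ext v
    simp only [LinearMap.mem_ker, Matrix.toLin'_apply]
    constructor
    · intro hv
      have h1 : (g' : Matrix (Fin n) (Fin n) K).mulVec ((m - 1).mulVec v) = 0 := by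
        have := hE v
        rw [hv] at this
        rw [← neg_neg ((g' : Matrix (Fin n) (Fin n) K).mulVec ((m - 1).mulVec v)), ← this,
          neg_zero]
      have h2 : m.mulVec ((g' : Matrix (Fin n) (Fin n) K).mulVec ((m - 1).mulVec v))
          = (m - 1).mulVec v := by
        rw [Matrix.mulVec_mulVec, hmg', Matrix.one_mulVec]
      rw [← h2, h1, Matrix.mulVec_zero]
    · intro hv
      rw [hE v, hv, Matrix.mulVec_zero, neg_zero]
  -- conclude
  show n - 1 ≤ Module.finrank K
    (LinearMap.ker (Matrix.toLin' ((g' : Matrix (Fin n) (Fin n) K) - 1)))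
  rw [hker]
  exact rank_bound hmatrix
end

section
/- Let 𝕂 be a field, let g be a 𝕂-algebra automorphism of the polynomial ring 𝕂[x₁,…,xₙ] such that g(𝔪^k) ⊆ 𝔪^k for all k ≥ 1, where 𝔪 = (x₁,…,xₙ), and let α ∈ 𝔪. If g·f − f lies in the ideal (α) of 𝕂[x₁,…,xₙ] for every polynomial f, then for the induced automorphism ĝ of the formal power series ring 𝕂[[x₁,…,xₙ]], the element ĝ·f − f lies in the ideal generated by α in 𝕂[[x₁,…,xₙ]] for every formal power series f. -/
open MvPolynomial

namespace Statement6Aux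

open Finsupp MvPowerSeries

variable {K : Type*} [Field K] {n : ℕ}

local notation "𝔫" => Ideal.span (Set.range (MvPowerSeries.X : Fin n → MvPowerSeries (Fin n) K))

lemma degree_add' (a b : Fin n →₀ ℕ) :
    Finsupp.degree (a + b) = Finsupp.degree a + Finsupp.degree b := by
  simp [Finsupp.degree_eq_weight_one, map_add]

lemma degree_single' (i : Fin n) : Finsupp.degree (Finsupp.single i 1) = 1 := by
  exact Finsupp.degree_single i 1

lemma X_mem (i : Fin n) : (MvPowerSeries.X i : MvPowerSeries (Fin n) K) ∈ 𝔫 :=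
  Ideal.subset_span ⟨i, rfl⟩

lemma constantCoeff_eq_zero_of_mem {G : MvPowerSeries (Fin n) K} (hG : G ∈ 𝔫) :
    MvPowerSeries.constantCoeff G = 0 := by
  have hle : 𝔫 ≤ RingHom.ker (MvPowerSeries.constantCoeff) := by
    rw [Ideal.span_le]
    rintro _ ⟨i, rfl⟩
    simp [RingHom.mem_ker]
  exact hle hG

/-- Elements of `𝔫^k` have vanishing coefficients in degree `< k`. -/
lemma coeff_eq_zero_of_mem_pow {k : ℕ} {F : MvPowerSeries (Fin n) K} (hF : F ∈ 𝔫 ^ k) :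
    ∀ e : Fin n →₀ ℕ, Finsupp.degree e < k → MvPowerSeries.coeff e F = 0 := by
  classical
  induction k generalizing F with
  | zero => intro e he; omega
  | succ k ih =>
    rw [pow_succ] at hF
    refine Submodule.mul_induction_on
      (C := fun x => ∀ e : Fin n →₀ ℕ, Finsupp.degree e < k + 1 → MvPowerSeries.coeff e x = 0)
      hF ?_ ?_
    · intro f hf G hG e he
      rw [MvPowerSeries.coeff_mul]
      apply Finset.sum_eq_zero
      rintro ⟨p, s⟩ hps
      have hpse : p + s = e := Finset.HasAntidiagonal.mem_antidiagonal.1 hps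
      by_cases hp : Finsupp.degree p < k
      · rw [ih hf p hp, zero_mul]
      · have hdeg : Finsupp.degree p + Finsupp.degree s = Finsupp.degree e := by
          rw [← degree_add', hpse]
        have hs : Finsupp.degree s = 0 := by omega
        have : s = 0 := (Finsupp.degree_eq_zero_iff s).1 hs
        subst this
        rw [MvPowerSeries.coeff_zero_eq_constantCoeff, constantCoeff_eq_zero_of_mem hG, mul_zero]
    · intro x y hx hy e he
      rw [map_add, hx e he, hy e he, add_zero]

/-- Converse: a power series with vanishing coefficients below degree `k` lies in `𝔫^k`. -/
lemma mem_pow_of_coeff_eq_zero {k : ℕ} {F : MvPowerSeries (Fin n) K}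
    (hF : ∀ e : Fin n →₀ ℕ, Finsupp.degree e < k → MvPowerSeries.coeff e F = 0) :
    F ∈ 𝔫 ^ k := by
  classical
  induction k generalizing F with
  | zero => simp [Ideal.one_eq_top]
  | succ k ih =>
    set G : Fin n → MvPowerSeries (Fin n) K := fun i e =>
      if h : (e + Finsupp.single i 1).support.Nonempty then
        (if (e + Finsupp.single i 1).support.min' h = i then F (e + Finsupp.single i 1) else 0)
      else 0 with hGdef
    have hFG : F = ∑ i : Fin n, MvPowerSeries.X i * G i := by
      apply MvPowerSeries.ext
      intro d
      rw [map_sum]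
      by_cases hd : d = 0
      · subst hd
        rw [hF 0 (by simp), Finset.sum_eq_zero]
        intro i _
        rw [X_def, MvPowerSeries.coeff_monomial_mul, if_neg]
        intro hle
        have := Finsupp.le_def.1 hle i
        simp at this
      · have hds : d.support.Nonempty := Finsupp.support_nonempty_iff.2 hd
        set j := d.support.min' hds with hj
        have hterm : ∀ i : Fin n, MvPowerSeries.coeff d (MvPowerSeries.X i * G i) =
            if Finsupp.single i 1 ≤ d then
              (if j = i then MvPowerSeries.coeff d F else 0) else 0 := by
          intro i
          rw [X_def, MvPowerSeries.coeff_monomial_mul]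
          by_cases hle : Finsupp.single i 1 ≤ d
          · rw [if_pos hle, if_pos hle, one_mul]
            have hcanceli : d - Finsupp.single i 1 + Finsupp.single i 1 = d :=
              tsub_add_cancel_of_le hle
            show G i (d - Finsupp.single i 1) = _
            rw [hGdef]
            simp only
            rw [dif_pos (by rw [hcanceli]; exact hds)]
            have hminval : ((d - Finsupp.single i 1 + Finsupp.single i 1).support.min'
                (by rw [hcanceli]; exact hds)) = j := by simp_rw [hcanceli]; rfl
            by_cases hji : j = i
            · rw [if_pos (by rw [hminval, hji]), if_pos hji]
              simp_rw [hcanceli]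
              rfl
            · rw [if_neg (by rw [hminval]; exact hji), if_neg hji]
          · rw [if_neg hle, if_neg hle]
        have hjd : d j ≠ 0 := Finsupp.mem_support_iff.1 (d.support.min'_mem hds)
        have hjle : Finsupp.single j 1 ≤ d := by rw [Finsupp.single_le_iff]; omega
        rw [Finset.sum_congr rfl (fun i _ => hterm i)]
        rw [Finset.sum_eq_single_of_mem j (Finset.mem_univ j)]
        · rw [if_pos hjle, if_pos rfl]
        · intro i _ hij
          simp [Ne.symm hij]
    rw [hFG]
    apply Ideal.sum_mem
    intro i _
    have hGi : G i ∈ 𝔫 ^ k := by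
      apply ih
      intro e he
      rw [MvPowerSeries.coeff_apply, hGdef]
      simp only
      have hnon : (e + Finsupp.single i 1).support.Nonempty := by
        rw [Finsupp.support_nonempty_iff]
        intro h0
        have := DFunLike.congr_fun h0 i
        simp at this
      rw [dif_pos hnon]
      split_ifs with h1
      · have : Finsupp.degree (e + Finsupp.single i 1) < k + 1 := by
          rw [degree_add', degree_single']; omega
        have := hF _ this
        rwa [MvPowerSeries.coeff_apply] at this
      · rfl
    rw [pow_succ']
    exact Ideal.mul_mem_mul (X_mem i) hGi


/-- Polynomial truncation: a polynomial matching `F` in all degrees `< k`. -/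
lemma exists_poly (F : MvPowerSeries (Fin n) K) (k : ℕ) :
    ∃ f : MvPolynomial (Fin n) K, ∀ e : Fin n →₀ ℕ, Finsupp.degree e < k →
      MvPowerSeries.coeff e (f : MvPowerSeries (Fin n) K) = MvPowerSeries.coeff e F := by
  classical
  set b : Fin n →₀ ℕ := Finsupp.equivFunOnFinite.symm (fun _ => k) with hb
  refine ⟨∑ m ∈ Finset.Iic b, MvPolynomial.monomial m (MvPowerSeries.coeff m F), ?_⟩
  intro e he
  have heb : e ∈ Finset.Iic b := by
    rw [Finset.mem_Iic]
    intro i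
    have h1 : e i ≤ Finsupp.degree e := Finsupp.le_degree i e
    have h2 : b i = k := rfl
    omega
  rw [MvPolynomial.coeff_coe, MvPolynomial.coeff_sum]
  rw [Finset.sum_eq_single_of_mem e heb]
  · rw [MvPolynomial.coeff_monomial, if_pos rfl]
  · intro m _ hme
    rw [MvPolynomial.coeff_monomial, if_neg hme]

/-- The degree-then-lex linear order embedding. -/
noncomputable def phi (e : Fin n →₀ ℕ) : ℕ ×ₗ Lex (Fin n →₀ ℕ) := toLex (Finsupp.degree e, toLex e)

lemma phi_add (a b : Fin n →₀ ℕ) : phi (a + b) = phi a + phi b := by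
  unfold phi
  rw [degree_add']
  rfl

lemma phi_inj {a b : Fin n →₀ ℕ} (h : phi a = phi b) : a = b := by
  have := congrArg (fun x : ℕ ×ₗ Lex (Fin n →₀ ℕ) => ofLex ((ofLex x).2)) h
  simpa [phi] using this

/-- Existence of a `phi`-minimal element of the support of a power series. -/
lemma exists_min (Q : MvPowerSeries (Fin n) K) (e : Fin n →₀ ℕ)
    (he : MvPowerSeries.coeff e Q ≠ 0) :
    ∃ e1, MvPowerSeries.coeff e1 Q ≠ 0 ∧ Finsupp.degree e1 ≤ Finsupp.degree e ∧
      ∀ s, MvPowerSeries.coeff s Q ≠ 0 → phi e1 ≤ phi s := by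
  classical
  have hfin : {f : Fin n →₀ ℕ | Finsupp.degree f ≤ Finsupp.degree e}.Finite :=
    Finsupp.finite_of_degree_le _
  set T : Finset (Fin n →₀ ℕ) :=
    hfin.toFinset.filter (fun s => MvPowerSeries.coeff s Q ≠ 0) with hT
  have heT : e ∈ T := by
    simp only [hT, Finset.mem_filter, Set.Finite.mem_toFinset, Set.mem_setOf_eq]
    exact ⟨le_rfl, he⟩
  obtain ⟨e1, he1T, hmin⟩ := T.exists_min_image phi ⟨e, heT⟩
  simp only [hT, Finset.mem_filter, Set.Finite.mem_toFinset, Set.mem_setOf_eq] at he1T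
  refine ⟨e1, he1T.2, he1T.1, ?_⟩
  intro s hs
  by_cases hds : Finsupp.degree s ≤ Finsupp.degree e
  · refine hmin s ?_
    simp only [hT, Finset.mem_filter, Set.Finite.mem_toFinset, Set.mem_setOf_eq]
    exact ⟨hds, hs⟩
  · have h1 : Finsupp.degree e1 < Finsupp.degree s := by
      have := he1T.1; omega
    exact le_of_lt (Prod.Lex.left _ _ h1)

/-- Coefficient of a product at the sum of `phi`-minimal support elements. -/
lemma coeff_mul_min {A B : MvPowerSeries (Fin n) K} {e0 e1 : Fin n →₀ ℕ}
    (hA : ∀ s, MvPowerSeries.coeff s A ≠ 0 → phi e0 ≤ phi s)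
    (hB : ∀ s, MvPowerSeries.coeff s B ≠ 0 → phi e1 ≤ phi s) :
    MvPowerSeries.coeff (e0 + e1) (A * B) =
      MvPowerSeries.coeff e0 A * MvPowerSeries.coeff e1 B := by
  classical
  rw [MvPowerSeries.coeff_mul]
  apply Finset.sum_eq_single_of_mem (e0, e1) (Finset.HasAntidiagonal.mem_antidiagonal.2 rfl)
  rintro ⟨p, s⟩ hmem hne
  have hsum : p + s = e0 + e1 := Finset.HasAntidiagonal.mem_antidiagonal.1 hmem
  by_contra hps
  have hp : MvPowerSeries.coeff p A ≠ 0 := fun h => hps (by rw [h, zero_mul])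
  have hs : MvPowerSeries.coeff s B ≠ 0 := fun h => hps (by rw [h, mul_zero])
  have h1 : phi e0 ≤ phi p := hA p hp
  have h2 : phi e1 ≤ phi s := hB s hs
  have h3 : phi p + phi s = phi e0 + phi e1 := by
    rw [← phi_add, ← phi_add, hsum]
  have h4 : phi p ≤ phi e0 := by
    have h5 : phi p + phi e1 ≤ phi p + phi s := add_le_add_right h2 _
    rw [h3] at h5
    exact le_of_add_le_add_right h5
  have hpe0 : p = e0 := phi_inj (le_antisymm h4 h1)
  subst hpe0
  have hse1 : s = e1 := by
    have := add_left_cancel hsum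
    exact this
  subst hse1
  exact hne rfl

/-- Cancellation: if `A * Q` has vanishing coefficients below `k` and `e0` is a
`phi`-minimal support element of `A`, then `Q` has vanishing coefficients below
`k - degree e0`. -/
lemma coeff_cancel {A : MvPowerSeries (Fin n) K} {e0 : Fin n →₀ ℕ}
    (hA0 : MvPowerSeries.coeff e0 A ≠ 0)
    (hAmin : ∀ s, MvPowerSeries.coeff s A ≠ 0 → phi e0 ≤ phi s)
    {Q : MvPowerSeries (Fin n) K} {k : ℕ}
    (hAQ : ∀ e : Fin n →₀ ℕ, Finsupp.degree e < k → MvPowerSeries.coeff e (A * Q) = 0) :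
    ∀ e : Fin n →₀ ℕ, Finsupp.degree e + Finsupp.degree e0 < k →
      MvPowerSeries.coeff e Q = 0 := by
  intro e he
  by_contra hne
  obtain ⟨e1, he1, hdeg, hmin⟩ := exists_min Q e hne
  have hz := hAQ (e0 + e1) (by rw [degree_add']; omega)
  rw [coeff_mul_min hAmin hmin] at hz
  exact mul_ne_zero hA0 he1 hz

end Statement6Aux

/-- If an automorphism `g` of `K[x₁,…,xₙ]` preserves all powers of the
maximal ideal `𝔪 = (x₁,…,xₙ)` and `g·f - f ∈ (α)` for all polynomials `f`, then for the
induced automorphism `ĝ` of `K[[x₁,…,xₙ]]` (the continuous extension of `g`, i.e. the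
automorphism extending `g` and preserving the powers of the maximal ideal of the power
series ring) one has `ĝ·F - F ∈ (α)` for every formal power series `F`. -/
theorem powerSeries_difference_mem_span {K : Type*} [Field K] {n : ℕ}
    (g : MvPolynomial (Fin n) K ≃ₐ[K] MvPolynomial (Fin n) K)
    (hgm : ∀ k : ℕ, ∀ f ∈ (Ideal.span (Set.range (X : Fin n → MvPolynomial (Fin n) K))) ^ k,
      g f ∈ (Ideal.span (Set.range (X : Fin n → MvPolynomial (Fin n) K))) ^ k)
    (α : MvPolynomial (Fin n) K)
    (hα : α ∈ Ideal.span (Set.range (X : Fin n → MvPolynomial (Fin n) K)))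
    (h : ∀ f : MvPolynomial (Fin n) K, g f - f ∈ Ideal.span {α})
    (ghat : MvPowerSeries (Fin n) K ≃ₐ[K] MvPowerSeries (Fin n) K)
    (hext : ∀ f : MvPolynomial (Fin n) K, ghat (f : MvPowerSeries (Fin n) K) =
      ((g f : MvPolynomial (Fin n) K) : MvPowerSeries (Fin n) K))
    (hcont : ∀ k : ℕ,
      ∀ F ∈ (Ideal.span (Set.range (MvPowerSeries.X : Fin n → MvPowerSeries (Fin n) K))) ^ k,
      ghat F ∈ (Ideal.span (Set.range (MvPowerSeries.X : Fin n → MvPowerSeries (Fin n) K))) ^ k) :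
    ∀ F : MvPowerSeries (Fin n) K,
      ghat F - F ∈ Ideal.span {(α : MvPowerSeries (Fin n) K)} := by
  classical
  intro F
  by_cases hα0 : α = 0
  · -- degenerate case: `g` is the identity on polynomials, so `ghat F = F`.
    have hz : ∀ e : Fin n →₀ ℕ, MvPowerSeries.coeff e (ghat F - F) = 0 := by
      intro e
      obtain ⟨f, hf⟩ := Statement6Aux.exists_poly F (Finsupp.degree e + 1)
      have hFf : F - (f : MvPowerSeries (Fin n) K) ∈
          (Ideal.span (Set.range
            (MvPowerSeries.X : Fin n → MvPowerSeries (Fin n) K))) ^ (Finsupp.degree e + 1) := by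
        apply Statement6Aux.mem_pow_of_coeff_eq_zero
        intro e' he'
        rw [map_sub, hf e' he', sub_self]
      have hgf : g f = f := by
        have hsf := h f
        rw [hα0, Ideal.span_singleton_eq_bot.2 rfl, Ideal.mem_bot, sub_eq_zero] at hsf
        exact hsf
      have hrw : ghat F - F = ghat (F - (f : MvPowerSeries (Fin n) K))
          - (F - (f : MvPowerSeries (Fin n) K)) := by
        rw [map_sub, hext f, hgf]; ring
      rw [hrw]
      exact Statement6Aux.coeff_eq_zero_of_mem_pow
        (Ideal.sub_mem _ (hcont _ _ hFf) hFf) e (by omega)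
    have hzero : ghat F - F = 0 := MvPowerSeries.ext fun e => by rw [hz e, map_zero]
    rw [hzero]
    exact Ideal.zero_mem _
  · have hαS : (α : MvPowerSeries (Fin n) K) ≠ 0 := by
      rwa [ne_eq, MvPolynomial.coe_eq_zero_iff]
    obtain ⟨eα, hα1⟩ : ∃ e, MvPowerSeries.coeff e (α : MvPowerSeries (Fin n) K) ≠ 0 := by
      by_contra hc
      push_neg at hc
      exact hαS (MvPowerSeries.ext fun e => by rw [hc e, map_zero])
    obtain ⟨e0, he0, -, hmin⟩ := Statement6Aux.exists_min _ eα hα1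
    set d := Finsupp.degree e0 with hd
    -- for every `k`, a polynomial cofactor approximating the difference modulo `𝔫^k`
    have hch : ∀ k : ℕ, ∃ qk : MvPolynomial (Fin n) K, ∀ e : Fin n →₀ ℕ,
        Finsupp.degree e < k →
        MvPowerSeries.coeff e (ghat F - F -
          (qk : MvPowerSeries (Fin n) K) * (α : MvPowerSeries (Fin n) K)) = 0 := by
      intro k
      obtain ⟨f, hf⟩ := Statement6Aux.exists_poly F k
      have hFf : F - (f : MvPowerSeries (Fin n) K) ∈
          (Ideal.span (Set.range
            (MvPowerSeries.X : Fin n → MvPowerSeries (Fin n) K))) ^ k := by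
        apply Statement6Aux.mem_pow_of_coeff_eq_zero
        intro e' he'
        rw [map_sub, hf e' he', sub_self]
      obtain ⟨qk, hqk⟩ := Ideal.mem_span_singleton'.1 (h f)
      refine ⟨qk, fun e he => ?_⟩
      have h2 : ((g f : MvPolynomial (Fin n) K) : MvPowerSeries (Fin n) K)
          - (f : MvPowerSeries (Fin n) K)
          = (qk : MvPowerSeries (Fin n) K) * (α : MvPowerSeries (Fin n) K) := by
        rw [← MvPolynomial.coe_mul, hqk]
        simp only [← MvPolynomial.coeToMvPowerSeries.ringHom_apply, map_sub]
      have heq : ghat F - F - (qk : MvPowerSeries (Fin n) K) * (α : MvPowerSeries (Fin n) K) =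
          ghat (F - (f : MvPowerSeries (Fin n) K)) - (F - (f : MvPowerSeries (Fin n) K)) := by
        rw [map_sub, hext f, ← h2]; ring
      rw [heq]
      exact Statement6Aux.coeff_eq_zero_of_mem_pow (Ideal.sub_mem _ (hcont _ _ hFf) hFf) e he
    choose q hq using hch
    -- the coefficients of the cofactors stabilize
    have stab : ∀ (j k : ℕ) (e : Fin n →₀ ℕ), Finsupp.degree e + d < j →
        Finsupp.degree e + d < k →
        MvPowerSeries.coeff e ((q j : MvPowerSeries (Fin n) K)) =
          MvPowerSeries.coeff e ((q k : MvPowerSeries (Fin n) K)) := by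
      intro j k e hj hk
      have hdiff : ∀ e' : Fin n →₀ ℕ, Finsupp.degree e' < min j k →
          MvPowerSeries.coeff e' ((α : MvPowerSeries (Fin n) K) *
            ((q j : MvPowerSeries (Fin n) K) - (q k : MvPowerSeries (Fin n) K))) = 0 := by
        intro e' he'
        have h1 := hq j e' (lt_of_lt_of_le he' (min_le_left _ _))
        have h2 := hq k e' (lt_of_lt_of_le he' (min_le_right _ _))
        have hrw : (α : MvPowerSeries (Fin n) K) *
            ((q j : MvPowerSeries (Fin n) K) - (q k : MvPowerSeries (Fin n) K)) =
            (ghat F - F - (q k : MvPowerSeries (Fin n) K) * (α : MvPowerSeries (Fin n) K)) -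
            (ghat F - F - (q j : MvPowerSeries (Fin n) K) * (α : MvPowerSeries (Fin n) K)) := by
          ring
        rw [hrw, map_sub, h2, h1, sub_zero]
      have hc := Statement6Aux.coeff_cancel he0 hmin hdiff e (lt_min hj hk)
      rw [map_sub] at hc
      exact sub_eq_zero.1 hc
    -- the limit cofactor
    set β : MvPowerSeries (Fin n) K := fun e =>
      MvPowerSeries.coeff e ((q (Finsupp.degree e + d + 1) : MvPowerSeries (Fin n) K)) with hβ
    rw [Ideal.mem_span_singleton']
    refine ⟨β, ?_⟩
    apply MvPowerSeries.ext
    intro e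
    have h1 : MvPowerSeries.coeff e (β * (α : MvPowerSeries (Fin n) K)) =
        MvPowerSeries.coeff e
          ((q (Finsupp.degree e + d + 1) : MvPowerSeries (Fin n) K) *
            (α : MvPowerSeries (Fin n) K)) := by
      rw [MvPowerSeries.coeff_mul, MvPowerSeries.coeff_mul]
      apply Finset.sum_congr rfl
      rintro ⟨p, s⟩ hmem
      have hps : p + s = e := Finset.HasAntidiagonal.mem_antidiagonal.1 hmem
      have hdp : Finsupp.degree p ≤ Finsupp.degree e := by
        rw [← hps, Statement6Aux.degree_add']; omega
      have hbp : MvPowerSeries.coeff p β =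
          MvPowerSeries.coeff p
            ((q (Finsupp.degree p + d + 1) : MvPowerSeries (Fin n) K)) := rfl
      rw [hbp, stab (Finsupp.degree p + d + 1) (Finsupp.degree e + d + 1) p
        (by omega) (by omega)]
    have h2 := hq (Finsupp.degree e + d + 1) e (by omega)
    rw [map_sub] at h2
    rw [h1]
    exact (sub_eq_zero.1 h2).symm
end

section
/- Let 𝕂 be a field and let g ∈ GL₃(𝕂) be an upper triangular matrix with dim ker(g − E) = 2 (i.e., g − E has rank 1). Then g has one of the following three forms, for some λ ∈ 𝕂* and a, b ∈ 𝕂: (i) rows (λ, a, b), (0, 1, 0), (0, 0, 1); (ii) rows (1, 0, b), (0, 1, a), (0, 0, λ); (iii) rows (1, (λ−1)b, ab), (0, λ, a), (0, 0, 1). -/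
open MvPolynomial Matrix

lemma rank_one_decomp {K : Type*} [Field K] (M : Matrix (Fin 3) (Fin 3) K)
    (h : Module.finrank K (LinearMap.ker (Matrix.toLin' M)) = 2) :
    ∃ v w : Fin 3 → K, ∀ i j, M i j = v i * w j := by
  have hr := LinearMap.finrank_range_add_finrank_ker (Matrix.toLin' M)
  rw [h] at hr
  have h3 : Module.finrank K (Fin 3 → K) = 3 := by simp
  rw [h3] at hr
  have h1 : Module.finrank K (LinearMap.range (Matrix.toLin' M)) ≤ 1 := by omega
  obtain ⟨v, hv⟩ := finrank_le_one_iff.mp h1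
  have hcol : ∀ j, ∃ c : K, c • (v : Fin 3 → K) = M.mulVec (Pi.single j 1) := by
    intro j
    obtain ⟨c, hc⟩ := hv ⟨M.mulVec (Pi.single j 1), ⟨Pi.single j 1, by
      simp [Matrix.toLin'_apply]⟩⟩
    exact ⟨c, by simpa [Subtype.ext_iff] using hc⟩
  choose w hw using hcol
  refine ⟨(v : Fin 3 → K), w, fun i j => ?_⟩
  have := congrFun (hw j) i
  simp only [Pi.smul_apply, smul_eq_mul, Matrix.mulVec_single, mul_one, MulOpposite.op_one, one_smul, Matrix.col_apply] at this
  rw [← this, mul_comm]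

def Matrix.IsUpperTri {K : Type*} [Field K] {n : ℕ} (g : Matrix (Fin n) (Fin n) K) : Prop :=
  ∀ i j : Fin n, j < i → g i j = 0

/-- Every upper triangular `g ∈ GL₃(K)` whose fixed space has dimension 2
is horizontal, vertical, or mixed. -/
theorem upper_triangular_pseudoreflection_classification {K : Type*} [Field K]
    (g : GL (Fin 3) K)
    (htri : Matrix.IsUpperTri ((g : Matrix (Fin 3) (Fin 3) K)))
    (hdim : fixedDim ((g : Matrix (Fin 3) (Fin 3) K)) = 2) :
    ∃ (l : K) (_ : l ≠ 0) (a b : K),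
      (g : Matrix (Fin 3) (Fin 3) K) = !![l, a, b; 0, 1, 0; 0, 0, 1] ∨
      (g : Matrix (Fin 3) (Fin 3) K) = !![1, 0, b; 0, 1, a; 0, 0, l] ∨
      (g : Matrix (Fin 3) (Fin 3) K) = !![1, (l - 1) * b, a * b; 0, l, a; 0, 0, 1] := by
  set A : Matrix (Fin 3) (Fin 3) K := (g : Matrix (Fin 3) (Fin 3) K) with hA
  have hA10 : A 1 0 = 0 := htri 1 0 (by decide)
  have hA20 : A 2 0 = 0 := htri 2 0 (by decide)
  have hA21 : A 2 1 = 0 := htri 2 1 (by decide)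
  -- determinant nonzero
  have hdet : A 0 0 * A 1 1 * A 2 2 ≠ 0 := by
    have hu : IsUnit A.det := (Matrix.isUnit_iff_isUnit_det A).mp ⟨g, rfl⟩
    have hd : A.det = A 0 0 * A 1 1 * A 2 2 := by
      rw [Matrix.det_fin_three, hA10, hA20, hA21]; ring
    rw [hd] at hu
    exact hu.ne_zero
  have h00ne : A 0 0 ≠ 0 := fun h => hdet (by rw [h]; ring)
  have h11ne : A 1 1 ≠ 0 := fun h => hdet (by rw [h]; ring)
  have h22ne : A 2 2 ≠ 0 := fun h => hdet (by rw [h]; ring)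
  -- rank one decomposition of A - 1
  obtain ⟨v, w, hvw⟩ := rank_one_decomp (A - 1) hdim
  have hM : ∀ i j, A i j - (if i = j then (1:K) else 0) = v i * w j := by
    intro i j
    have := hvw i j
    simpa [Matrix.sub_apply, Matrix.one_apply] using this
  have e00 : A 0 0 - 1 = v 0 * w 0 := by simpa using hM 0 0
  have e01 : A 0 1 = v 0 * w 1 := by simpa using hM 0 1
  have e02 : A 0 2 = v 0 * w 2 := by simpa using hM 0 2
  have e11 : A 1 1 - 1 = v 1 * w 1 := by simpa using hM 1 1
  have e12 : A 1 2 = v 1 * w 2 := by simpa using hM 1 2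
  have e22 : A 2 2 - 1 = v 2 * w 2 := by simpa using hM 2 2
  have z10 : v 1 * w 0 = 0 := by have := hM 1 0; rw [hA10] at this; simpa using this.symm
  have z20 : v 2 * w 0 = 0 := by have := hM 2 0; rw [hA20] at this; simpa using this.symm
  have z21 : v 2 * w 1 = 0 := by have := hM 2 1; rw [hA21] at this; simpa using this.symm
  -- vanishing 2x2 minors
  have hps : (A 0 0 - 1) * (A 1 1 - 1) = 0 := by
    rw [e00, e11]; linear_combination v 0 * w 1 * z10
  have hpt : (A 0 0 - 1) * A 1 2 = 0 := by
    rw [e00, e12]; linear_combination v 0 * w 2 * z10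
  have hpu : (A 0 0 - 1) * (A 2 2 - 1) = 0 := by
    rw [e00, e22]; linear_combination v 0 * w 2 * z20
  have hqu : A 0 1 * (A 2 2 - 1) = 0 := by
    rw [e01, e22]; linear_combination v 0 * w 2 * z21
  have hsu : (A 1 1 - 1) * (A 2 2 - 1) = 0 := by
    rw [e11, e22]; linear_combination v 1 * w 2 * z21
  have hqt : A 0 1 * A 1 2 = A 0 2 * (A 1 1 - 1) := by
    rw [e01, e12, e02, e11]; ring
  by_cases hp : A 0 0 = 1
  · by_cases hs : A 1 1 = 1
    · by_cases hu : A 2 2 = 1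
      · -- all diagonal 1
        have hprod : A 0 1 * A 1 2 = 0 := by rw [hqt, hs]; ring
        rcases mul_eq_zero.mp hprod with hq | ht
        · exact ⟨1, one_ne_zero, A 1 2, A 0 2, Or.inr (Or.inl (by
            ext i j; fin_cases i <;> fin_cases j <;>
              simp [Matrix.vecHead, Matrix.vecTail, hA10, hA20, hA21, hp, hs, hu, hq]))⟩
        · exact ⟨1, one_ne_zero, A 0 1, A 0 2, Or.inl (by
            ext i j; fin_cases i <;> fin_cases j <;>
              simp [Matrix.vecHead, Matrix.vecTail, hA10, hA20, hA21, hp, hs, hu, ht])⟩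
      · -- u ≠ 0 : form (ii)
        have hu' : A 2 2 - 1 ≠ 0 := sub_ne_zero.mpr hu
        have hq : A 0 1 = 0 := by
          rcases mul_eq_zero.mp hqu with h | h
          exacts [h, absurd h hu']
        exact ⟨A 2 2, h22ne, A 1 2, A 0 2, Or.inr (Or.inl (by
          ext i j; fin_cases i <;> fin_cases j <;>
            simp [Matrix.vecHead, Matrix.vecTail, hA10, hA20, hA21, hp, hs, hq]))⟩
    · -- s ≠ 0 : form (iii)
      have hs' : A 1 1 - 1 ≠ 0 := sub_ne_zero.mpr hs
      have hu : A 2 2 = 1 := by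
        rcases mul_eq_zero.mp hsu with h | h
        exacts [absurd h hs', sub_eq_zero.mp h]
      refine ⟨A 1 1, h11ne, A 1 2, A 0 1 / (A 1 1 - 1), Or.inr (Or.inr ?_)⟩
      have hb1 : (A 1 1 - 1) * (A 0 1 / (A 1 1 - 1)) = A 0 1 := by
        field_simp
      have hb2 : A 1 2 * (A 0 1 / (A 1 1 - 1)) = A 0 2 := by
        field_simp
        linear_combination hqt
      ext i j; fin_cases i <;> fin_cases j <;>
        simp [Matrix.vecHead, Matrix.vecTail, hA10, hA20, hA21, hp, hu, hb1, hb2]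
  · -- p ≠ 0 : form (i)
    have hp' : A 0 0 - 1 ≠ 0 := sub_ne_zero.mpr hp
    have hs : A 1 1 = 1 := by
      rcases mul_eq_zero.mp hps with h | h
      exacts [absurd h hp', sub_eq_zero.mp h]
    have ht : A 1 2 = 0 := by
      rcases mul_eq_zero.mp hpt with h | h
      exacts [absurd h hp', h]
    have hu : A 2 2 = 1 := by
      rcases mul_eq_zero.mp hpu with h | h
      exacts [absurd h hp', sub_eq_zero.mp h]
    exact ⟨A 0 0, h00ne, A 0 1, A 0 2, Or.inl (by
      ext i j; fin_cases i <;> fin_cases j <;>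
        simp [Matrix.vecHead, Matrix.vecTail, hA10, hA20, hA21, hs, ht, hu])⟩
end

section
/- Let 𝕂 be a field of characteristic p > 0, let n ≥ 1, and let G be a finite subgroup of the group of invertible upper triangular n×n matrices over 𝕂. Then the set H of unipotent elements of G is a subgroup of G, and H is the unique Sylow p-subgroup of G; in particular, H is normal in G. -/
open MvPolynomial Matrix
def Matrix.IsUnipotentMat {K : Type*} [Field K] {n : ℕ} (g : Matrix (Fin n) (Fin n) K) : Prop :=
  IsNilpotent (g - 1)

section Aux
variable {K : Type*} [Field K] {n : ℕ}

lemma myUpperTri_iff {g : Matrix (Fin n) (Fin n) K} :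
    g.IsUpperTri ↔ g.BlockTriangular id := by
  constructor
  · intro h i j hij; exact h i j hij
  · intro h i j hij; exact h hij

lemma myDiag_mul {a b : Matrix (Fin n) (Fin n) K} (ha : a.IsUpperTri) (hb : b.IsUpperTri)
    (i : Fin n) : (a * b) i i = a i i * b i i := by
  rw [Matrix.mul_apply]
  apply Finset.sum_eq_single i
  · intro k _ hk
    rcases lt_or_gt_of_ne hk with h | h
    · rw [ha i k h, zero_mul]
    · rw [hb k i h, mul_zero]
  · intro h; exact absurd (Finset.mem_univ i) h

lemma myDiag_pow {a : Matrix (Fin n) (Fin n) K} (ha : a.IsUpperTri) (m : ℕ) (i : Fin n) :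
    (a ^ m) i i = (a i i) ^ m := by
  induction m with
  | zero => simp [Matrix.one_apply]
  | succ m ih =>
    have hpow : (a ^ m).IsUpperTri := by
      clear ih
      induction m with
      | zero => rw [pow_zero, myUpperTri_iff]; exact Matrix.blockTriangular_one
      | succ k ihk =>
        rw [pow_succ, myUpperTri_iff]
        exact (myUpperTri_iff.mp ihk).mul (myUpperTri_iff.mp ha)
    rw [pow_succ, pow_succ, myDiag_mul hpow ha, ih]

/-- an upper triangular matrix with all-ones diagonal is unipotent, with `(g-1)^n = 0`. -/
lemma myNilpotent {g : Matrix (Fin n) (Fin n) K} (hg : g.IsUpperTri)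
    (hd : ∀ i, g i i = 1) : (g - 1) ^ n = 0 := by
  have hcp : g.charpoly = (Polynomial.X - Polynomial.C 1) ^ n := by
    rw [Matrix.charpoly_of_upperTriangular g (myUpperTri_iff.mp hg)]
    simp only [hd]
    rw [Finset.prod_const, Finset.card_univ, Fintype.card_fin]
  have := g.aeval_self_charpoly
  rw [hcp] at this
  simpa [Polynomial.aeval_X, map_sub, map_pow] using this

end Aux

/-- In a finite group `G` of invertible upper triangular matrices over a
field of characteristic `p > 0`, the unipotent elements form a subgroup which is the
unique Sylow `p`-subgroup of `G`; in particular it is normal. -/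
theorem unipotent_subgroup_is_unique_sylow {K : Type*} [Field K] {p : ℕ} (hp : 0 < p)
    [CharP K p] {n : ℕ} (hn : 1 ≤ n)
    (G : Subgroup (GL (Fin n) K)) [Finite G]
    (htri : ∀ g ∈ G, Matrix.IsUpperTri ((g : Matrix (Fin n) (Fin n) K))) :
    ∃ H : Subgroup G,
      ((H : Set G) =
        {g : G | Matrix.IsUnipotentMat (((g : GL (Fin n) K)) : Matrix (Fin n) (Fin n) K)}) ∧
      (∃ P : Sylow p G, (P : Subgroup G) = H) ∧
      (∀ P : Sylow p G, (P : Subgroup G) = H) ∧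
      H.Normal := by
  haveI : NeZero p := ⟨hp.ne'⟩
  haveI hFp : Fact p.Prime := CharP.char_is_prime_of_pos K p
  -- matrix of an element of G
  set M : G → Matrix (Fin n) (Fin n) K := fun g => ((g : GL (Fin n) K) : Matrix (Fin n) (Fin n) K)
    with hM
  have htri' : ∀ g : G, (M g).IsUpperTri := fun g => htri g.1 g.2
  have hM1 : M 1 = 1 := rfl
  have hMmul : ∀ g h : G, M (g * h) = M g * M h := fun g h => rfl
  have hMinv : ∀ g : G, M g⁻¹ = (M g)⁻¹ := by
    intro g
    exact Matrix.coe_units_inv (g : GL (Fin n) K)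
  have htriinv : ∀ g : G, (M g⁻¹).IsUpperTri := by
    intro g
    rw [hMinv, myUpperTri_iff]
    haveI : Invertible (M g) := (Units.isUnit (g : GL (Fin n) K)).invertible
    exact Matrix.blockTriangular_inv_of_blockTriangular (myUpperTri_iff.mp (htri' g))
  have hMpow : ∀ (g : G) (m : ℕ), M (g ^ m) = (M g) ^ m := by
    intro g m
    induction m with
    | zero => simpa using hM1
    | succ m ih => rw [pow_succ, pow_succ, hMmul, ih]
  -- unipotent iff diagonal all ones
  have hunip_iff : ∀ g : G, (M g).IsUnipotentMat ↔ ∀ i, M g i i = 1 := by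
    intro g
    constructor
    · rintro ⟨m, hm⟩ i
      have hsub : (M g - 1).IsUpperTri := by
        rw [myUpperTri_iff] at *
        exact (myUpperTri_iff.mp (htri' g)).sub Matrix.blockTriangular_one
      have := myDiag_pow hsub m i
      rw [hm] at this
      have hdi : (M g i i - 1) ^ m = 0 := by
        simpa [Matrix.sub_apply, Matrix.one_apply] using this.symm
      have hm0 : m ≠ 0 := by rintro rfl; simp at hdi
      have := pow_eq_zero_iff hm0 |>.mp hdi
      have := sub_eq_zero.mp this
      exact this
    · intro hd
      exact ⟨n, myNilpotent (htri' g) hd⟩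
  -- key exponent: p ^ n ≥ n
  haveI : Nonempty (Fin n) := Fin.pos_iff_nonempty.mp hn
  haveI : CharP (Matrix (Fin n) (Fin n) K) p := inferInstance
  -- diag-one elements are p-elements
  have hMinj : ∀ g h : G, M g = M h → g = h := fun g h e => Subtype.ext (Units.ext e)
  have hppow : ∀ g : G, (∀ i, M g i i = 1) → g ^ p ^ n = 1 := by
    intro g hg
    apply hMinj
    rw [hMpow, hM1]
    have hnil : (M g - 1) ^ n = 0 := myNilpotent (htri' g) hg
    have hfrob : (M g - 1) ^ p ^ n = (M g) ^ p ^ n - 1 ^ p ^ n :=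
      sub_pow_char_pow_of_commute (p := p) (n := n) (h := Commute.one_right (M g))
    have hzero : (M g - 1) ^ p ^ n = 0 := by
      have hle : n ≤ p ^ n := le_of_lt (Nat.lt_pow_self hFp.out.one_lt : n < p ^ n)
      calc (M g - 1) ^ p ^ n = (M g - 1) ^ n * (M g - 1) ^ (p ^ n - n) := by
            rw [← pow_add, Nat.add_sub_cancel' hle]
        _ = 0 := by rw [hnil, zero_mul]
    rw [hfrob, one_pow] at hzero
    have := sub_eq_zero.mp hzero
    exact this
  -- p-elements have diag one
  have hpdiag : ∀ (g : G) (k : ℕ), g ^ p ^ k = 1 → ∀ i, M g i i = 1 := by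
    intro g k hg i
    have h1 : (M g) ^ p ^ k = 1 := by rw [← hMpow, hg, hM1]
    have h2 : (M g i i) ^ p ^ k = 1 := by
      have := myDiag_pow (htri' g) (p ^ k) i
      rw [h1, Matrix.one_apply_eq] at this
      exact this.symm
    have h3 : (M g i i - 1) ^ p ^ k = 0 := by
      rw [sub_pow_char_pow, h2, one_pow, sub_self]
    have := pow_eq_zero_iff (pow_ne_zero k hFp.out.ne_zero) |>.mp h3
    exact sub_eq_zero.mp this
  -- the subgroup
  let H : Subgroup G :=
          { carrier := {g : G | ∀ i, M g i i = 1}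
            one_mem' := by intro i; simp [hM1, Matrix.one_apply]
            mul_mem' := by
              intro a b ha hb i
              rw [hMmul, myDiag_mul (htri' a) (htri' b), ha i, hb i, one_mul]
            inv_mem' := by
              intro a ha i
              have h1 : M (a * a⁻¹) i i = M a i i * M a⁻¹ i i := by
                rw [hMmul]; exact myDiag_mul (htri' a) (htriinv a) i
              rw [mul_inv_cancel] at h1
              rw [hM1, Matrix.one_apply_eq, ha i, one_mul] at h1
              exact h1.symm }
  have hHmem : ∀ g : G, g ∈ H ↔ ∀ i, M g i i = 1 := fun g => Iff.rfl
  refine ⟨H, ?_, ?_, ?_, ?_⟩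
  case refine_1 =>
    ext g
    exact (hunip_iff g).symm
  all_goals {
    have hHp : IsPGroup p H := by
      intro g
      refine ⟨n, ?_⟩
      have h := hppow g.1 ((hHmem g.1).mp g.2)
      exact Subtype.ext (by simpa using h)
    have hle : ∀ P : Sylow p G, (P : Subgroup G) ≤ H := by
      intro P x hx
      obtain ⟨k, hk⟩ := P.isPGroup' ⟨x, hx⟩
      rw [hHmem]
      refine hpdiag x k ?_
      have := congrArg Subtype.val hk
      simpa using this
    have heq : ∀ P : Sylow p G, (P : Subgroup G) = H := fun P =>
      (P.is_maximal' hHp (hle P)).symm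
    first
    | exact ⟨Classical.arbitrary (Sylow p G), heq _⟩
    | exact heq
    | { constructor
        intro x hx g
        have hx' := (hHmem x).mp hx
        refine (hHmem _).mpr fun j => ?_
        have htgx : (M g * M x).IsUpperTri := by
          rw [myUpperTri_iff]
          exact (myUpperTri_iff.mp (htri' g)).mul (myUpperTri_iff.mp (htri' x))
        have : M (g * x * g⁻¹) j j = (M g * M x) j j * M g⁻¹ j j := by
          rw [hMmul, hMmul]
          exact myDiag_mul (by rw [← hMmul]; exact htri' (g * x)) (htriinv g) j
        rw [myDiag_mul (htri' g) (htri' x) j, hx' j, mul_one] at this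
        have hgj : M g j j * M g⁻¹ j j = 1 := by
          have h1 : M (g * g⁻¹) j j = M g j j * M g⁻¹ j j := by
            rw [hMmul]; exact myDiag_mul (htri' g) (htriinv g) j
          rw [mul_inv_cancel, hM1, Matrix.one_apply_eq] at h1
          exact h1.symm
        rw [this, hgj] } }
end

section
/- Let 𝕂 be an algebraically closed field of characteristic p > 0 and let L be a finite additive subgroup of (𝕂, +), so |L| = p^l for some l ≥ 0. Let B = { matrices with rows (1, 0, β), (0, 1, 0), (0, 0, 1) : β ∈ L } ≤ GL₃(𝕂), acting on W = 𝕂³ with coordinates x, y, z. Then 𝕂[x, y, z]^B = 𝕂[z, y, ∏_{β ∈ L}(x + βz)], and these three generators are algebraically independent; in particular the ring of invariants of B is a polynomial algebra. -/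
open MvPolynomial Matrix

/-- The corner transvection with parameter `β`. -/
noncomputable def cornerGL {K : Type*} [Field K] (β : K) : GL (Fin 3) K :=
  Matrix.GeneralLinearGroup.mkOfDetNeZero
    !![1, 0, β; 0, 1, 0; 0, 0, 1] (by simp [Matrix.det_fin_three, Matrix.vecHead, Matrix.vecTail])

section Aux

variable {K : Type*} [Field K]

lemma cornerGL_coe (β : K) :
    ((cornerGL β : GL (Fin 3) K) : Matrix (Fin 3) (Fin 3) K) = !![1, 0, β; 0, 1, 0; 0, 0, 1] := rfl

lemma cornerGL_mul (β γ : K) : cornerGL β * cornerGL γ = cornerGL (β + γ) := by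
  ext i j
  simp only [Units.val_mul, cornerGL_coe]
  fin_cases i <;> fin_cases j <;>
    simp [Matrix.mul_apply, Fin.sum_univ_three, Matrix.vecHead, Matrix.vecTail, add_comm]

lemma cornerGL_zero : (cornerGL 0 : GL (Fin 3) K) = 1 := by
  ext i j
  simp only [cornerGL_coe, Units.val_one]
  fin_cases i <;> fin_cases j <;> simp [Matrix.vecHead, Matrix.vecTail, Matrix.one_apply]

lemma cornerGL_inv (β : K) : (cornerGL β)⁻¹ = cornerGL (-β) := by
  apply inv_eq_of_mul_eq_one_right
  rw [cornerGL_mul, add_neg_cancel, cornerGL_zero]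

lemma polyAct_cornerGL (β : K) :
    polyAct (cornerGL β) = aeval ![X 0 - C β * X 2, X 1, X 2] := by
  unfold polyAct
  congr 1
  funext i
  rw [cornerGL_inv]
  fin_cases i <;>
    simp [cornerGL_coe, Fin.sum_univ_three, Matrix.vecHead, Matrix.vecTail,
      MvPolynomial.smul_eq_C_mul] <;> ring

lemma polyAct_cornerGL_prod (L : AddSubgroup K) [Fintype L] {β : K} (hβ : β ∈ L) :
    polyAct (cornerGL β) (∏ γ : L, (X 0 + C (γ : K) * X 2))
      = ∏ γ : L, (X 0 + C (γ : K) * X 2) := by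
  rw [polyAct_cornerGL, map_prod]
  refine (Fintype.prod_equiv (Equiv.addRight (⟨β, hβ⟩ : L)) _ _ fun γ => ?_).symm
  simp only [map_add, _root_.map_mul, aeval_X, aeval_C, Equiv.coe_addRight, AddSubgroup.coe_add,
    Matrix.cons_val_zero, Matrix.cons_val_one, Matrix.head_cons, Matrix.cons_val_two,
    Matrix.tail_cons, MvPolynomial.algebraMap_eq, AlgHom.commutes]
  ring

lemma e_X0 : finSuccEquiv K 2 (X 0) = Polynomial.X := finSuccEquiv_X_zero

lemma e_X1 : finSuccEquiv K 2 (X 1) = Polynomial.C (X 0) := by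
  have : (1 : Fin 3) = Fin.succ 0 := rfl
  rw [this, finSuccEquiv_X_succ]

lemma e_X2 : finSuccEquiv K 2 (X 2) = Polynomial.C (X 1) := by
  have : (2 : Fin 3) = Fin.succ 1 := rfl
  rw [this, finSuccEquiv_X_succ]

lemma e_C (a : K) : finSuccEquiv K 2 (C a) = Polynomial.C (C a) := by
  simp [finSuccEquiv_apply]

lemma e_polyAct (β : K) (f : MvPolynomial (Fin 3) K) :
    finSuccEquiv K 2 (polyAct (cornerGL β) f)
      = (finSuccEquiv K 2 f).comp (Polynomial.X - Polynomial.C (C β * X 1)) := by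
  have h : (finSuccEquiv K 2).toAlgHom.comp (polyAct (cornerGL β))
      = ((Polynomial.aeval (Polynomial.X - Polynomial.C (C β * X 1)) :
          Polynomial (MvPolynomial (Fin 2) K) →ₐ[MvPolynomial (Fin 2) K] _).restrictScalars
          K).comp (finSuccEquiv K 2).toAlgHom := by
    apply MvPolynomial.algHom_ext
    intro i
    fin_cases i <;>
      simp [polyAct_cornerGL, e_X0, e_X1, e_X2, e_C, Polynomial.algebraMap_eq]
  have h2 := congrArg
    (fun (g : MvPolynomial (Fin 3) K →ₐ[K] Polynomial (MvPolynomial (Fin 2) K)) => g f) h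
  simpa [Polynomial.comp_eq_aeval] using h2

lemma const_of_comp_invariant (L : AddSubgroup K) [Fintype L]
    (R : Polynomial (MvPolynomial (Fin 2) K))
    (hdeg : R.natDegree < Fintype.card L)
    (hR : ∀ β ∈ L, R.comp (Polynomial.X - Polynomial.C (C β * X 1)) = R) :
    R = Polynomial.C (R.eval 0) := by
  have hinj : Function.Injective (fun b : L => (C (b : K) * X 1 : MvPolynomial (Fin 2) K)) := by
    intro a b h
    exact Subtype.ext (MvPolynomial.C_injective _ _
      (mul_right_cancel₀ (MvPolynomial.X_ne_zero 1) h))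
  have heval : ∀ b : L, (R - Polynomial.C (R.eval 0)).eval (C (b : K) * X 1) = 0 := by
    intro b
    have h1 := congrArg (Polynomial.eval (C (b : K) * X 1)) (hR b b.2)
    rw [Polynomial.eval_comp] at h1
    simp only [Polynomial.eval_sub, Polynomial.eval_X, Polynomial.eval_C, sub_self] at h1
    simp [← h1]
  have := Polynomial.eq_zero_of_natDegree_lt_card_of_eval_eq_zero
    (R - Polynomial.C (R.eval 0)) hinj heval (by rwa [Polynomial.natDegree_sub_C])
  exact sub_eq_zero.mp this

lemma symmC_mem (G : Set (MvPolynomial (Fin 3) K)) (h1 : X 1 ∈ G) (h2 : X 2 ∈ G)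
    (a : MvPolynomial (Fin 2) K) :
    (finSuccEquiv K 2).symm (Polynomial.C a) ∈ Algebra.adjoin K G := by
  set ρ : MvPolynomial (Fin 2) K →ₐ[K] MvPolynomial (Fin 3) K := aeval ![X 1, X 2] with hρ
  have key : (finSuccEquiv K 2).symm (Polynomial.C a) = ρ a := by
    have hcomp : (finSuccEquiv K 2).toAlgHom.comp ρ =
        (Polynomial.CAlgHom : MvPolynomial (Fin 2) K →ₐ[K] _) := by
      apply MvPolynomial.algHom_ext
      intro i
      fin_cases i <;> simp [hρ, e_X1, e_X2, Polynomial.CAlgHom]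
    have := congrArg (fun (g : MvPolynomial (Fin 2) K →ₐ[K] _) => g a) hcomp
    simp only [AlgHom.comp_apply, AlgEquiv.toAlgHom_eq_coe, AlgHom.coe_coe] at this
    rw [show (Polynomial.CAlgHom a : Polynomial (MvPolynomial (Fin 2) K)) = Polynomial.C a
      from rfl] at this
    rw [← this]; exact (finSuccEquiv K 2).symm_apply_apply _
  rw [key]; clear key
  have ha : a ∈ Algebra.adjoin K (Set.range (X : Fin 2 → MvPolynomial (Fin 2) K)) := by
    rw [adjoin_range_X]; trivial
  induction ha using Algebra.adjoin_induction with
  | mem x hx =>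
    obtain ⟨i, rfl⟩ := hx
    fin_cases i
    · simpa [hρ] using Algebra.subset_adjoin h1
    · simpa [hρ] using Algebra.subset_adjoin h2
  | algebraMap r => rw [AlgHom.commutes]; exact Subalgebra.algebraMap_mem _ r
  | add x y hx hy ihx ihy => simpa [map_add] using add_mem ihx ihy
  | mul x y hx hy ihx ihy => simpa [_root_.map_mul] using mul_mem ihx ihy

open Polynomial in
lemma invariant_mem_adjoin (L : AddSubgroup K) [Fintype L]
    (f : MvPolynomial (Fin 3) K)
    (hf : ∀ β ∈ L, polyAct (cornerGL β) f = f) :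
    f ∈ Algebra.adjoin K {(MvPolynomial.X 2 : MvPolynomial (Fin 3) K), MvPolynomial.X 1,
      ∏ β : L, (MvPolynomial.X 0 + MvPolynomial.C (β : K) * MvPolynomial.X 2)} := by
  set F : MvPolynomial (Fin 3) K :=
    ∏ β : L, (MvPolynomial.X 0 + MvPolynomial.C (β : K) * MvPolynomial.X 2) with hF
  set G : Set (MvPolynomial (Fin 3) K) := {MvPolynomial.X 2, MvPolynomial.X 1, F} with hG
  have h1G : MvPolynomial.X 1 ∈ G := by simp [hG]
  have h2G : MvPolynomial.X 2 ∈ G := by simp [hG]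
  have hFG : F ∈ G := by simp [hG]
  set q : ℕ := Fintype.card L with hqdef
  have hq : 0 < q := Fintype.card_pos
  set Fe : Polynomial (MvPolynomial (Fin 2) K) := finSuccEquiv K 2 F with hFe
  have hFeprod : Fe = ∏ β : L,
      (Polynomial.X + Polynomial.C (MvPolynomial.C (β : K) * MvPolynomial.X 1)) := by
    rw [hFe, hF, map_prod]
    exact Finset.prod_congr rfl fun b _ => by
      rw [map_add, _root_.map_mul, e_X0, e_X2, e_C, ← Polynomial.C_mul]
  have hmonic : Fe.Monic := by
    rw [hFeprod]
    exact monic_prod_of_monic _ _ fun b _ => Polynomial.monic_X_add_C _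
  have hdegFe : Fe.natDegree = q := by
    rw [hFeprod, Polynomial.natDegree_prod_of_monic _ _ fun b _ => Polynomial.monic_X_add_C _]
    simp only [Polynomial.natDegree_X_add_C, Finset.sum_const, smul_eq_mul, mul_one,
      Finset.card_univ, hqdef]
  have hFinv : ∀ β ∈ L,
      Fe.comp (Polynomial.X - Polynomial.C (MvPolynomial.C β * MvPolynomial.X 1)) = Fe := by
    intro β hβ
    rw [hFe, ← e_polyAct, hF, polyAct_cornerGL_prod L hβ]
  suffices H : ∀ n : ℕ, ∀ f : MvPolynomial (Fin 3) K, (∀ β ∈ L, polyAct (cornerGL β) f = f) →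
      (finSuccEquiv K 2 f).natDegree ≤ n → f ∈ Algebra.adjoin K G by
    exact H (finSuccEquiv K 2 f).natDegree f hf le_rfl
  intro n
  induction n using Nat.strong_induction_on with
  | _ n ih =>
    intro f hf hdeg
    have hfe : ∀ β ∈ L, (finSuccEquiv K 2 f).comp
        (Polynomial.X - Polynomial.C (MvPolynomial.C β * MvPolynomial.X 1))
        = finSuccEquiv K 2 f := by
      intro β hβ
      rw [← e_polyAct, hf β hβ]
    by_cases hlt : (finSuccEquiv K 2 f).natDegree < q
    · have hconst := const_of_comp_invariant L (finSuccEquiv K 2 f) (by rwa [← hqdef]) hfe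
      have : f = (finSuccEquiv K 2).symm (Polynomial.C ((finSuccEquiv K 2 f).eval 0)) := by
        rw [← hconst, AlgEquiv.symm_apply_apply]
      rw [this]
      exact symmC_mem G h1G h2G _
    · push_neg at hlt
      set Q : Polynomial (MvPolynomial (Fin 2) K) := finSuccEquiv K 2 f /ₘ Fe with hQ
      set R : Polynomial (MvPolynomial (Fin 2) K) := finSuccEquiv K 2 f %ₘ Fe with hR
      have hdiv : R + Fe * Q = finSuccEquiv K 2 f := modByMonic_add_div _ Fe
      have hRdeg : R.degree < Fe.degree := degree_modByMonic_lt _ hmonic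
      have hRnat : R.natDegree < q := by
        rw [← hdegFe]
        rcases eq_or_ne R 0 with h | h
        · rw [h, Polynomial.natDegree_zero, hdegFe]; exact hq
        · exact Polynomial.natDegree_lt_natDegree h hRdeg
      have hQR : ∀ β ∈ L,
          (finSuccEquiv K 2 f /ₘ Fe).comp
            (Polynomial.X - Polynomial.C (MvPolynomial.C β * MvPolynomial.X 1)) = Q ∧
          (finSuccEquiv K 2 f %ₘ Fe).comp
            (Polynomial.X - Polynomial.C (MvPolynomial.C β * MvPolynomial.X 1)) = R := by
        intro β hβ
        set s : Polynomial (MvPolynomial (Fin 2) K) :=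
          Polynomial.X - Polynomial.C (MvPolynomial.C β * MvPolynomial.X 1) with hs
        have hcompdiv : R.comp s + Fe * Q.comp s = finSuccEquiv K 2 f := by
          have h := congrArg (fun p : Polynomial (MvPolynomial (Fin 2) K) => p.comp s) hdiv
          have e1 := hFinv β hβ
          have e2 := hfe β hβ
          rw [← hs] at e1 e2
          simp only [Polynomial.add_comp, Polynomial.mul_comp, e1] at h
          exact h.trans e2
        have hdegcomp : (R.comp s).degree < Fe.degree := by
          rcases eq_or_ne R 0 with h | h
          · rw [h, Polynomial.zero_comp, Polynomial.degree_zero]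
            exact bot_lt_iff_ne_bot.mpr fun hh => hmonic.ne_zero (Polynomial.degree_eq_bot.mp hh)
          · have hs1 : s.natDegree = 1 := by rw [hs]; exact Polynomial.natDegree_X_sub_C _
            have hsne : s ≠ Polynomial.C (s.coeff 0) := fun hh => by
              have h2 := congrArg Polynomial.natDegree hh
              rw [hs1, Polynomial.natDegree_C] at h2; exact one_ne_zero h2
            have hcne : R.comp s ≠ 0 := by
              intro hzero
              rcases Polynomial.comp_eq_zero_iff.mp hzero with h0 | ⟨-, h0⟩
              exacts [h h0, hsne h0]
            rw [Polynomial.degree_eq_natDegree hcne, Polynomial.natDegree_comp, hs1, mul_one,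
              ← Polynomial.degree_eq_natDegree h]
            exact hRdeg
        have := div_modByMonic_unique (f := finSuccEquiv K 2 f) (Q.comp s) (R.comp s) hmonic ⟨hcompdiv, hdegcomp⟩
        exact ⟨this.1.symm, this.2.symm⟩
      have hQinv : ∀ β ∈ L, polyAct (cornerGL β) ((finSuccEquiv K 2).symm Q)
          = (finSuccEquiv K 2).symm Q := by
        intro β hβ
        apply (finSuccEquiv K 2).injective
        rw [e_polyAct, AlgEquiv.apply_symm_apply, (hQR β hβ).1]
      have hQmem : (finSuccEquiv K 2).symm Q ∈ Algebra.adjoin K G := by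
        refine ih Q.natDegree ?_ _ hQinv (by rw [AlgEquiv.apply_symm_apply])
        have h1 : Q.natDegree = (finSuccEquiv K 2 f).natDegree - q := by
          rw [hQ, natDegree_divByMonic _ hmonic, hdegFe]
        refine lt_of_lt_of_le ?_ hdeg
        rw [h1]
        exact Nat.sub_lt (lt_of_lt_of_le hq hlt) hq
      have hRconst := const_of_comp_invariant L R hRnat (fun β hβ => (hQR β hβ).2)
      have hRmem : (finSuccEquiv K 2).symm R ∈ Algebra.adjoin K G := by
        rw [hRconst]
        exact symmC_mem G h1G h2G _
      have hsplit : f = (finSuccEquiv K 2).symm R + F * (finSuccEquiv K 2).symm Q := by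
        apply (finSuccEquiv K 2).injective
        rw [map_add, _root_.map_mul, AlgEquiv.apply_symm_apply, AlgEquiv.apply_symm_apply,
          ← hFe, hdiv]
      rw [hsplit]
      exact add_mem hRmem (mul_mem (Algebra.subset_adjoin hFG) hQmem)

open Polynomial in
lemma indep_aux (L : AddSubgroup K) [Fintype L] :
    AlgebraicIndependent K ![(MvPolynomial.X 2 : MvPolynomial (Fin 3) K), MvPolynomial.X 1,
      ∏ β : L, (MvPolynomial.X 0 + MvPolynomial.C (β : K) * MvPolynomial.X 2)] := by
  set F : MvPolynomial (Fin 3) K :=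
    ∏ β : L, (MvPolynomial.X 0 + MvPolynomial.C (β : K) * MvPolynomial.X 2) with hF
  set Fe : Polynomial (MvPolynomial (Fin 2) K) := finSuccEquiv K 2 F with hFe
  have hFeprod : Fe = ∏ β : L,
      (Polynomial.X + Polynomial.C (MvPolynomial.C (β : K) * MvPolynomial.X 1)) := by
    rw [hFe, hF, map_prod]
    exact Finset.prod_congr rfl fun b _ => by
      rw [map_add, _root_.map_mul, e_X0, e_X2, e_C, ← Polynomial.C_mul]
  have hmonic : Fe.Monic := by
    rw [hFeprod]; exact monic_prod_of_monic _ _ fun b _ => Polynomial.monic_X_add_C _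
  have hdegFe : Fe.natDegree = Fintype.card L := by
    rw [hFeprod, Polynomial.natDegree_prod_of_monic _ _ fun b _ => Polynomial.monic_X_add_C _]
    simp only [Polynomial.natDegree_X_add_C, Finset.sum_const, smul_eq_mul, mul_one,
      Finset.card_univ]
  have hFene : Fe ≠ Polynomial.C (Fe.coeff 0) := by
    intro h
    have h2 := congrArg Polynomial.natDegree h
    rw [hdegFe, Polynomial.natDegree_C] at h2
    have := Fintype.card_pos (α := L)
    omega
  have hx : AlgebraicIndependent K ![(MvPolynomial.X 2 : MvPolynomial (Fin 3) K),
      MvPolynomial.X 1] := by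
    have h := (MvPolynomial.algebraicIndependent_X (Fin 3) K).comp
      (![2, 1] : Fin 2 → Fin 3) (by decide)
    convert h using 1
    funext i
    fin_cases i <;> rfl
  have htrans : Transcendental (Algebra.adjoin K
      (Set.range ![(MvPolynomial.X 2 : MvPolynomial (Fin 3) K), MvPolynomial.X 1])) F := by
    set S := Algebra.adjoin K
      (Set.range ![(MvPolynomial.X 2 : MvPolynomial (Fin 3) K), MvPolynomial.X 1]) with hS
    rw [transcendental_iff]
    intro p hp
    set τ : MvPolynomial (Fin 3) K →ₐ[K] MvPolynomial (Fin 2) K :=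
      aeval ![0, MvPolynomial.X 0, MvPolynomial.X 1] with hτ
    have key : ∀ s : S, Polynomial.C (τ (s : MvPolynomial (Fin 3) K))
        = finSuccEquiv K 2 (s : MvPolynomial (Fin 3) K) := by
      rintro ⟨s, hs⟩
      induction hs using Algebra.adjoin_induction with
      | mem x hx =>
        obtain ⟨i, rfl⟩ := hx
        fin_cases i
        · show Polynomial.C (τ (MvPolynomial.X 2)) = finSuccEquiv K 2 (MvPolynomial.X 2)
          rw [e_X2]; simp [hτ]
        · show Polynomial.C (τ (MvPolynomial.X 1)) = finSuccEquiv K 2 (MvPolynomial.X 1)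
          rw [e_X1]; simp [hτ]
      | algebraMap r =>
        simp only [MvPolynomial.algebraMap_eq]
        rw [e_C]; simp [hτ]
      | add x y hx hy ihx ihy => simp only [map_add, ihx, ihy]
      | mul x y hx hy ihx ihy => simp only [_root_.map_mul, ihx, ihy]
    have h0 : (finSuccEquiv K 2).toRingHom (Polynomial.aeval F p) = 0 := by rw [hp]; simp
    rw [Polynomial.aeval_def, Polynomial.hom_eval₂] at h0
    set ψ : S →+* MvPolynomial (Fin 2) K := τ.toRingHom.comp (SubalgebraClass.val S) with hψ
    have hcomp : ((finSuccEquiv K 2).toRingHom.comp (algebraMap S (MvPolynomial (Fin 3) K)))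
        = Polynomial.C.comp ψ := by
      exact RingHom.ext fun s => (key s).symm
    rw [hcomp] at h0
    have h1 : (p.map ψ).comp Fe = 0 := by
      rw [Polynomial.comp, Polynomial.eval₂_map]
      exact h0
    rcases Polynomial.comp_eq_zero_iff.mp h1 with h2 | ⟨-, h2⟩
    · have hψinj : Function.Injective ψ := by
        intro a b hab
        have h3 : finSuccEquiv K 2 (a : MvPolynomial (Fin 3) K)
            = finSuccEquiv K 2 (b : MvPolynomial (Fin 3) K) := by
          rw [← key a, ← key b]
          show Polynomial.C (ψ a) = Polynomial.C (ψ b)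
          rw [hab]
        exact Subtype.ext ((finSuccEquiv K 2).injective h3)
      exact (Polynomial.map_eq_zero_iff hψinj).mp h2
    · exact absurd h2 hFene
  have hopt := (hx.option_iff_transcendental F).mpr htrans
  have hcomp := hopt.comp
    (fun i : Fin 3 => (![some 0, some 1, none] : Fin 3 → Option (Fin 2)) i) (by decide)
  convert hcomp using 1
  funext i
  fin_cases i <;> rfl

end Aux

/-- The invariant ring of the group `B` of corner transvections with
parameters in a finite additive subgroup `L ≤ (K, +)` is the polynomial algebra
`K[z, y, ∏_{β ∈ L} (x + βz)]`. -/
theorem invariants_of_corner_group {K : Type*} [Field K] [IsAlgClosed K] {p : ℕ}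
    (hp : 0 < p) [CharP K p]
    (L : AddSubgroup K) [Fintype L]
    (B : Subgroup (GL (Fin 3) K))
    (hB : (B : Set (GL (Fin 3) K)) = {g : GL (Fin 3) K | ∃ β ∈ L, g = cornerGL β}) :
    AlgebraicIndependent K
      ![(X 2 : MvPolynomial (Fin 3) K), X 1, ∏ β : L, (X 0 + C (β : K) * X 2)] ∧
    invariants B = Algebra.adjoin K
      {(X 2 : MvPolynomial (Fin 3) K), X 1, ∏ β : L, (X 0 + C (β : K) * X 2)} := by
  have hmemB : ∀ g : GL (Fin 3) K, g ∈ B ↔ ∃ β ∈ L, g = cornerGL β := by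
    intro g
    rw [← SetLike.mem_coe, hB]
    exact Iff.rfl
  have hinv_iff : ∀ f : MvPolynomial (Fin 3) K,
      f ∈ invariants B ↔ ∀ g ∈ B, polyAct g f = f := by
    intro f
    simp [invariants, Algebra.mem_iInf, AlgHom.mem_equalizer]
  refine ⟨indep_aux L, le_antisymm ?_ ?_⟩
  · intro f hf
    refine invariant_mem_adjoin L f fun β hβ => ?_
    exact (hinv_iff f).mp hf (cornerGL β) ((hmemB _).mpr ⟨β, hβ, rfl⟩)
  · refine Algebra.adjoin_le ?_
    rintro x hx
    rw [SetLike.mem_coe, hinv_iff]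
    intro g hg
    obtain ⟨β, hβ, rfl⟩ := (hmemB g).mp hg
    rcases hx with rfl | rfl | rfl
    · rw [polyAct_cornerGL]
      simp
    · rw [polyAct_cornerGL]
      simp
    · exact polyAct_cornerGL_prod L hβ
end

section
/- Let 𝕂 be an algebraically closed field of odd characteristic p, let s ∈ 𝕂, and let c₁, …, c_t ∈ 𝕂. For each i let σᵢ ∈ GL₃(𝕂) be the matrix with rows (1, s−cᵢ, cᵢ(cᵢ−s)/2), (0, −1, cᵢ), (0, 0, 1), and let A = ⟨σ₁, …, σ_t⟩. Let K be the additive subgroup of (𝕂, +) generated by the differences cᵢ − cⱼ (1 ≤ i, j ≤ t), and let A_K = { matrices with rows (1, α, α(α−s)/2), (0, 1, α), (0, 0, 1) : α ∈ K }. Then for all i, j the product σᵢσⱼ is the matrix with rows (1, cᵢ−cⱼ, (cᵢ−cⱼ)(cᵢ−cⱼ−s)/2), (0, 1, cᵢ−cⱼ), (0, 0, 1); moreover A_K is a subgroup of A of index 2, A = A_K ∪ σ₁A_K, and |A| = 2|K| = 2p^k where |K| = p^k. -/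
open MvPolynomial Matrix

/-- The mixed pseudoreflection `σᵢ` with parameters `s, c`. -/
noncomputable def sigmaGL {K : Type*} [Field K] (s c : K) : GL (Fin 3) K :=
  Matrix.GeneralLinearGroup.mkOfDetNeZero
    !![1, s - c, c * (c - s) / 2; 0, -1, c; 0, 0, 1]
    (by simp [Matrix.det_fin_three, Matrix.vecHead, Matrix.vecTail])

/-- The unipotent element of `A_K` with parameter `α`. -/
noncomputable def mixedUnipGL {K : Type*} [Field K] (s α : K) : GL (Fin 3) K :=
  Matrix.GeneralLinearGroup.mkOfDetNeZero
    !![1, α, α * (α - s) / 2; 0, 1, α; 0, 0, 1]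
    (by simp [Matrix.det_fin_three, Matrix.vecHead, Matrix.vecTail])

section Aux

variable {K : Type*} [Field K] (s : K) (h2 : (2:K) ≠ 0)

lemma u_val (α : K) : (mixedUnipGL s α : Matrix (Fin 3) (Fin 3) K) =
    !![1, α, α * (α - s) / 2; 0, 1, α; 0, 0, 1] := rfl

lemma sigma_val (a : K) : (sigmaGL s a : Matrix (Fin 3) (Fin 3) K) =
    !![1, s - a, a * (a - s) / 2; 0, -1, a; 0, 0, 1] := rfl

lemma u_zero : mixedUnipGL s (0:K) = 1 := by
  ext i j
  simp only [u_val, Units.val_one]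
  fin_cases i <;> fin_cases j <;>
    simp [Matrix.one_apply, Matrix.vecHead, Matrix.vecTail]

lemma u_inj {α β : K} (h : mixedUnipGL s α = mixedUnipGL s β) : α = β := by
  have := congrArg (fun g : GL (Fin 3) K => (g : Matrix (Fin 3) (Fin 3) K) 0 1) h
  simpa [u_val] using this

include h2

lemma u_mul (α β : K) : mixedUnipGL s α * mixedUnipGL s β = mixedUnipGL s (α + β) := by
  ext i j
  simp only [Units.val_mul, u_val]
  fin_cases i <;> fin_cases j <;>
    simp [Matrix.mul_apply, Fin.sum_univ_three, Matrix.vecHead, Matrix.vecTail] <;>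
    (try field_simp) <;> (try ring)

lemma sigma_mul (a b : K) : sigmaGL s a * sigmaGL s b = mixedUnipGL s (a - b) := by
  ext i j
  simp only [Units.val_mul, u_val, sigma_val]
  fin_cases i <;> fin_cases j <;>
    simp [Matrix.mul_apply, Fin.sum_univ_three, Matrix.vecHead, Matrix.vecTail] <;>
    (try field_simp) <;> (try ring)

lemma sigma_u_sigma (a α : K) :
    sigmaGL s a * mixedUnipGL s α * sigmaGL s a = mixedUnipGL s (-α) := by
  ext i j
  simp only [Units.val_mul, u_val, sigma_val]
  fin_cases i <;> fin_cases j <;>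
    simp [Matrix.mul_apply, Fin.sum_univ_three, Matrix.vecHead, Matrix.vecTail] <;>
    (try field_simp) <;> (try ring)

lemma sigma_sq (a : K) : sigmaGL s a * sigmaGL s a = 1 := by
  rw [sigma_mul s h2, sub_self, u_zero]

lemma sigma_inv (a : K) : (sigmaGL s a)⁻¹ = sigmaGL s a :=
  inv_eq_of_mul_eq_one_right (sigma_sq s h2 a)

lemma u_inv (α : K) : (mixedUnipGL s α)⁻¹ = mixedUnipGL s (-α) := by
  apply inv_eq_of_mul_eq_one_right
  rw [u_mul s h2, add_neg_cancel, u_zero]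

lemma sigma_comm (a α : K) :
    sigmaGL s a * mixedUnipGL s α = mixedUnipGL s (-α) * sigmaGL s a := by
  conv_rhs => rw [← sigma_u_sigma s h2 a α]
  rw [mul_assoc, sigma_sq s h2, mul_one]

lemma prod_u_su (a α β : K) : mixedUnipGL s α * (sigmaGL s a * mixedUnipGL s β) =
    sigmaGL s a * mixedUnipGL s (-α + β) := by
  conv_rhs => rw [← u_mul s h2 (-α) β, ← mul_assoc, sigma_comm s h2 a (-α), neg_neg, mul_assoc]

lemma prod_su_u (a α β : K) : (sigmaGL s a * mixedUnipGL s α) * mixedUnipGL s β =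
    sigmaGL s a * mixedUnipGL s (α + β) := by
  rw [mul_assoc, u_mul s h2]

lemma prod_su_su (a α β : K) : (sigmaGL s a * mixedUnipGL s α) * (sigmaGL s a * mixedUnipGL s β) =
    mixedUnipGL s (-α + β) := by
  conv_lhs => rw [sigma_comm s h2 a α, mul_assoc, ← mul_assoc (sigmaGL s a), sigma_sq s h2,
    one_mul, u_mul s h2]

lemma inv_su (a α : K) : (sigmaGL s a * mixedUnipGL s α)⁻¹ = sigmaGL s a * mixedUnipGL s α := by
  rw [_root_.mul_inv_rev, u_inv s h2, sigma_inv s h2, sigma_comm s h2 a α]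

lemma u_ne_sigma_mul (a α β : K) :
    mixedUnipGL s α ≠ sigmaGL s a * mixedUnipGL s β := by
  intro h
  have := congrArg (fun g : GL (Fin 3) K => (g : Matrix (Fin 3) (Fin 3) K) 1 1) h
  simp only [u_val, Units.val_mul, sigma_val, Matrix.mul_apply, Fin.sum_univ_three] at this
  simp [Matrix.vecHead, Matrix.vecTail] at this
  apply h2
  linear_combination this

lemma det_u (α : K) : Matrix.GeneralLinearGroup.det (mixedUnipGL s α) = 1 := by
  apply Units.ext
  show ((mixedUnipGL s α : Matrix (Fin 3) (Fin 3) K)).det = 1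
  simp [u_val, Matrix.det_fin_three, Matrix.vecHead, Matrix.vecTail]

lemma det_sigma (a : K) : Matrix.GeneralLinearGroup.det (sigmaGL s a) = -1 := by
  apply Units.ext
  show ((sigmaGL s a : Matrix (Fin 3) (Fin 3) K)).det = -1
  simp [sigma_val, Matrix.det_fin_three, Matrix.vecHead, Matrix.vecTail]

/-- The subgroup `A_K`. -/
noncomputable def mixedSubgroup (Kg : AddSubgroup K) : Subgroup (GL (Fin 3) K) where
  carrier := {g : GL (Fin 3) K | ∃ α ∈ Kg, g = mixedUnipGL s α}
  one_mem' := ⟨0, zero_mem _, (u_zero s).symm⟩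
  mul_mem' := by
    rintro _ _ ⟨α, hα, rfl⟩ ⟨β, hβ, rfl⟩
    exact ⟨α + β, add_mem hα hβ, u_mul s h2 α β⟩
  inv_mem' := by
    rintro _ ⟨α, hα, rfl⟩
    exact ⟨-α, neg_mem hα, u_inv s h2 α⟩

lemma mem_mixedSubgroup {Kg : AddSubgroup K} {g : GL (Fin 3) K} :
    g ∈ mixedSubgroup s h2 Kg ↔ ∃ α ∈ Kg, g = mixedUnipGL s α := Iff.rfl

/-- The subgroup `A_K ∪ σ·A_K`. -/
noncomputable def mixedFullSubgroup (a : K) (Kg : AddSubgroup K) : Subgroup (GL (Fin 3) K) where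
  carrier := (mixedSubgroup s h2 Kg : Set (GL (Fin 3) K)) ∪
      (fun x => sigmaGL s a * x) '' (mixedSubgroup s h2 Kg : Set (GL (Fin 3) K))
  one_mem' := Or.inl (one_mem _)
  mul_mem' := by
    rintro x y (⟨α, hα, rfl⟩ | ⟨_, ⟨α, hα, rfl⟩, rfl⟩) (⟨β, hβ, rfl⟩ | ⟨_, ⟨β, hβ, rfl⟩, rfl⟩)
    · exact Or.inl ⟨α + β, add_mem hα hβ, u_mul s h2 α β⟩
    · exact Or.inr ⟨mixedUnipGL s (-α + β), ⟨-α + β, add_mem (neg_mem hα) hβ, rfl⟩,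
        (prod_u_su s h2 a α β).symm⟩
    · exact Or.inr ⟨mixedUnipGL s (α + β), ⟨α + β, add_mem hα hβ, rfl⟩,
        (prod_su_u s h2 a α β).symm⟩
    · exact Or.inl ⟨-α + β, add_mem (neg_mem hα) hβ, prod_su_su s h2 a α β⟩
  inv_mem' := by
    rintro x (⟨α, hα, rfl⟩ | ⟨_, ⟨α, hα, rfl⟩, rfl⟩)
    · exact Or.inl ⟨-α, neg_mem hα, u_inv s h2 α⟩
    · exact Or.inr ⟨mixedUnipGL s α, ⟨α, hα, rfl⟩, (inv_su s h2 a α).symm⟩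

end Aux

/-- Structure of the group `A = ⟨σ₁, …, σ_t⟩` of mixed pseudoreflections:
`σᵢσⱼ` is the displayed unipotent matrix, `A_K` is a subgroup of `A` of index 2,
`A = A_K ∪ σ₁A_K`, and `|A| = 2|K| = 2pᵏ`. -/
theorem structure_of_mixed_group {K : Type*} [Field K] [IsAlgClosed K] {p : ℕ}
    (hp : p.Prime) (hodd : Odd p) [CharP K p]
    (s : K) (t : ℕ) (ht : 0 < t) (c : Fin t → K)
    (A : Subgroup (GL (Fin 3) K))
    (hA : A = Subgroup.closure (Set.range fun i : Fin t => sigmaGL s (c i)))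
    (Kgrp : AddSubgroup K)
    (hK : Kgrp = AddSubgroup.closure {d : K | ∃ i j : Fin t, d = c i - c j}) :
    (∀ i j : Fin t, ((sigmaGL s (c i) * sigmaGL s (c j) : GL (Fin 3) K) :
        Matrix (Fin 3) (Fin 3) K) =
      !![1, c i - c j, (c i - c j) * (c i - c j - s) / 2; 0, 1, c i - c j; 0, 0, 1]) ∧
    ∃ A_K : Subgroup (GL (Fin 3) K),
      ((A_K : Set (GL (Fin 3) K)) = {g : GL (Fin 3) K | ∃ α ∈ Kgrp, g = mixedUnipGL s α}) ∧
      A_K ≤ A ∧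
      A_K.relIndex A = 2 ∧
      ((A : Set (GL (Fin 3) K)) =
        (A_K : Set (GL (Fin 3) K)) ∪
          (fun x => sigmaGL s (c ⟨0, ht⟩) * x) '' (A_K : Set (GL (Fin 3) K))) ∧
      Nat.card A = 2 * Nat.card Kgrp ∧
      ∃ k : ℕ, Nat.card Kgrp = p ^ k := by
  haveI : Fact p.Prime := ⟨hp⟩
  have hp2 : p ≠ 2 := by
    rintro rfl
    exact absurd (Nat.odd_iff.mp hodd) (by norm_num)
  have h2 : (2 : K) ≠ 0 := by
    intro h
    have h' := (CharP.cast_eq_zero_iff K p 2).mp h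
    exact hp2 ((Nat.prime_dvd_prime_iff_eq hp Nat.prime_two).mp h')
  have hgen : ∀ i j : Fin t, (c i - c j) ∈ Kgrp := fun i j =>
    hK ▸ AddSubgroup.subset_closure ⟨i, j, rfl⟩
  have hσA : ∀ i, sigmaGL s (c i) ∈ A := fun i =>
    hA ▸ Subgroup.subset_closure ⟨i, rfl⟩
  have hle : mixedSubgroup s h2 Kgrp ≤ A := by
    rintro g ⟨α, hα, rfl⟩
    rw [hK] at hα
    induction hα using AddSubgroup.closure_induction with
    | mem x hx =>
      obtain ⟨i, j, rfl⟩ := hx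
      rw [← sigma_mul s h2]
      exact mul_mem (hσA i) (hσA j)
    | zero =>
      rw [u_zero]
      exact one_mem A
    | add x y hx hy ihx ihy =>
      rw [← u_mul s h2]
      exact mul_mem ihx ihy
    | neg x hx ih =>
      rw [← u_inv s h2]
      exact inv_mem ih
  have hunion : (A : Set (GL (Fin 3) K)) =
      (mixedSubgroup s h2 Kgrp : Set (GL (Fin 3) K)) ∪
        (fun x => sigmaGL s (c ⟨0, ht⟩) * x) ''
          (mixedSubgroup s h2 Kgrp : Set (GL (Fin 3) K)) := by
    apply Set.Subset.antisymm
    · have hfull : A ≤ mixedFullSubgroup s h2 (c ⟨0, ht⟩) Kgrp := by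
        rw [hA]
        refine (Subgroup.closure_le _).mpr ?_
        rintro g ⟨i, rfl⟩
        refine Or.inr ⟨mixedUnipGL s (c ⟨0, ht⟩ - c i), ⟨_, hgen _ i, rfl⟩, ?_⟩
        show sigmaGL s (c ⟨0, ht⟩) * mixedUnipGL s (c ⟨0, ht⟩ - c i) = sigmaGL s (c i)
        rw [← sigma_mul s h2, ← mul_assoc, sigma_sq s h2, one_mul]
      exact fun x hx => hfull hx
    · rintro g (hg | ⟨x, hx, rfl⟩)
      · exact hle hg
      · exact mul_mem (hσA ⟨0, ht⟩) (hle hx)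
  set f : A →* Kˣ := (Matrix.GeneralLinearGroup.det).comp A.subtype with hf
  have hker : f.ker = (mixedSubgroup s h2 Kgrp).subgroupOf A := by
    ext ⟨g, hg⟩
    simp only [MonoidHom.mem_ker, Subgroup.mem_subgroupOf]
    constructor
    · intro hdet
      have hg' : g ∈ (A : Set (GL (Fin 3) K)) := hg
      rw [hunion] at hg'
      rcases hg' with h | ⟨x, hx, rfl⟩
      · exact h
      · exfalso
        obtain ⟨β, hβ, rfl⟩ := hx
        have hval : f ⟨_, hg⟩ = -1 := by
          show Matrix.GeneralLinearGroup.det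
            (sigmaGL s (c ⟨0, ht⟩) * mixedUnipGL s β) = -1
          rw [_root_.map_mul, det_sigma s h2, det_u s h2, mul_one]
        rw [hdet] at hval
        have hval' := congrArg Units.val hval
        apply h2
        have : (1 : K) = -1 := hval'
        linear_combination this
    · rintro ⟨α, hα, hgu⟩
      show Matrix.GeneralLinearGroup.det g = 1
      rw [hgu]
      exact det_u s h2 α
  have hrel : (mixedSubgroup s h2 Kgrp).relIndex A = 2 := by
    have : (mixedSubgroup s h2 Kgrp).relIndex A = f.ker.index := by
      rw [hker]; rfl
    rw [this, Subgroup.index_ker]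
    have hrange : f.range = Subgroup.zpowers (-1 : Kˣ) := by
      apply le_antisymm
      · rintro x ⟨⟨g, hg⟩, rfl⟩
        have hg' : g ∈ (A : Set (GL (Fin 3) K)) := hg
        rw [hunion] at hg'
        rcases hg' with ⟨α, hα, rfl⟩ | ⟨x', ⟨β, hβ, rfl⟩, rfl⟩
        · have : f ⟨_, hg⟩ = 1 := det_u s h2 α
          rw [this]
          exact one_mem _
        · have : f ⟨_, hg⟩ = -1 := by
            show Matrix.GeneralLinearGroup.det
              (sigmaGL s (c ⟨0, ht⟩) * mixedUnipGL s β) = -1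
            rw [_root_.map_mul, det_sigma s h2, det_u s h2, mul_one]
          rw [this]
          exact Subgroup.mem_zpowers _
      · rw [Subgroup.zpowers_le]
        exact ⟨⟨sigmaGL s (c ⟨0, ht⟩), hσA _⟩, det_sigma s h2 _⟩
    rw [hrange, Nat.card_zpowers]
    haveI : Fact (Nat.Prime 2) := ⟨Nat.prime_two⟩
    refine orderOf_eq_prime ?_ ?_
    · exact neg_one_sq
    · intro h
      apply h2
      have := congrArg Units.val h
      have h1 : (-1 : K) = 1 := this
      linear_combination -h1
  have e1 : Nat.card ↥(mixedSubgroup s h2 Kgrp) = Nat.card ↥Kgrp := by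
    refine Nat.card_congr (Equiv.symm (Equiv.ofBijective
      (fun a : ↥Kgrp => (⟨mixedUnipGL s a.1, a.1, a.2, rfl⟩ : ↥(mixedSubgroup s h2 Kgrp)))
      ⟨?_, ?_⟩))
    · intro a b hab
      exact Subtype.ext (u_inj s (congrArg Subtype.val hab))
    · rintro ⟨g, α, hα, rfl⟩
      exact ⟨⟨α, hα⟩, rfl⟩
  have hcard : Nat.card A = 2 * Nat.card Kgrp := by
    have h3 := Subgroup.index_mul_card ((mixedSubgroup s h2 Kgrp).subgroupOf A)
    have h4 : Nat.card ↥((mixedSubgroup s h2 Kgrp).subgroupOf A) = Nat.card ↥Kgrp := by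
      rw [← e1]
      exact Nat.card_congr (Subgroup.subgroupOfEquivOfLe hle).toEquiv
    have h5 : ((mixedSubgroup s h2 Kgrp).subgroupOf A).index = 2 := hrel
    rw [← h3, h4, h5]
  refine ⟨fun i j => by rw [sigma_mul s h2]; rfl,
    mixedSubgroup s h2 Kgrp, rfl, hle, hrel, hunion, hcard, ?_⟩
  -- |K| = p ^ k
  letI : Module (ZMod p) K := (ZMod.castHom dvd_rfl K).toModule
  have hSfin : {d : K | ∃ i j : Fin t, d = c i - c j}.Finite := by
    refine Set.Finite.subset (Set.finite_range fun ij : Fin t × Fin t => c ij.1 - c ij.2) ?_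
    rintro d ⟨i, j, rfl⟩
    exact ⟨(i, j), rfl⟩
  have hKV : Kgrp = (Submodule.span (ZMod p) {d : K | ∃ i j : Fin t, d = c i - c j}).toAddSubgroup := by
    apply le_antisymm
    · rw [hK]
      exact (AddSubgroup.closure_le _).mpr Submodule.subset_span
    · intro x hx
      refine Submodule.span_induction ?_ ?_ ?_ ?_ hx
      · intro d hd
        rw [hK]
        exact AddSubgroup.subset_closure hd
      · exact zero_mem _
      · intro a b _ _ ha hb
        exact add_mem ha hb
      · intro z a _ ha
        exact ZMod.smul_mem ha z
  haveI : FiniteDimensional (ZMod p) ↥(Submodule.span (ZMod p) {d : K | ∃ i j : Fin t, d = c i - c j}) := FiniteDimensional.span_of_finite (ZMod p) hSfin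
  haveI : Finite ↥(Submodule.span (ZMod p) {d : K | ∃ i j : Fin t, d = c i - c j}) := Module.finite_of_finite (ZMod p)
  haveI := Fintype.ofFinite ↥(Submodule.span (ZMod p) {d : K | ∃ i j : Fin t, d = c i - c j})
  refine ⟨Module.finrank (ZMod p) ↥(Submodule.span (ZMod p) {d : K | ∃ i j : Fin t, d = c i - c j}), ?_⟩
  have hVcard : Nat.card ↥(Submodule.span (ZMod p) {d : K | ∃ i j : Fin t, d = c i - c j}) = p ^ Module.finrank (ZMod p) ↥(Submodule.span (ZMod p) {d : K | ∃ i j : Fin t, d = c i - c j}) := by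
    rw [Nat.card_eq_fintype_card, Module.card_eq_pow_finrank (K := ZMod p) (V := ↥(Submodule.span (ZMod p) {d : K | ∃ i j : Fin t, d = c i - c j})), ZMod.card]
  rw [hKV]
  exact hVcard
end
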